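/- arXiv:2101.00649 — 8 statements merged into one kernel-verified Lean document; each statement's English description precedes it below -/
import Mathlib

section
/- Let A ∈ ℝ^{d×d} be Hurwitz. Then there exist a symmetric positive definite matrix P ∈ ℝ^{d×d} and a scalar λ > 0 such that for every t ≥ 0 and every ξ ∈ ℝ^d, (exp(t·A)·ξ)ᵀ P (exp(t·A)·ξ) ≤ exp(−λ·t) · ξᵀPξ, where exp denotes the matrix exponential. -/
open Matrix NormedSpace MeasureTheory

/-- A real square matrix is Hurwitz if every root in `ℂ` of its characteristic
polynomial has strictly negative real part. -/
def IsHurwitz {d : ℕ} (M : Matrix (Fin d) (Fin d) ℝ) : Prop :=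
  ∀ μ ∈ (Matrix.charpoly (M.map Complex.ofReal)).roots, μ.re < 0

section Aux

variable {d : ℕ}



lemma exp_mulVec_tsum (M : Matrix (Fin d) (Fin d) ℂ) (v : Fin d → ℂ) :
    (exp M).mulVec v = ∑' k : ℕ, ((k.factorial : ℂ))⁻¹ • (M ^ k).mulVec v := by
  letI : SeminormedRing (Matrix (Fin d) (Fin d) ℂ) := Matrix.linftyOpSemiNormedRing
  letI : NormedRing (Matrix (Fin d) (Fin d) ℂ) := Matrix.linftyOpNormedRing
  letI : NormedAlgebra ℂ (Matrix (Fin d) (Fin d) ℂ) := Matrix.linftyOpNormedAlgebra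
  let L : Matrix (Fin d) (Fin d) ℂ →ₗ[ℂ] (Fin d → ℂ) :=
    { toFun := fun Q => Q.mulVec v
      map_add' := fun Q R => Matrix.add_mulVec Q R v
      map_smul' := fun c Q => by simp [Matrix.smul_mulVec] }
  have hL : Continuous L := L.continuous_of_finiteDimensional
  have hs : Summable fun k : ℕ => ((k.factorial : ℂ))⁻¹ • M ^ k := expSeries_summable' M
  have h := (hs.hasSum.mapL (L.toContinuousLinearMap)).tsum_eq
  rw [exp_eq_tsum ℂ]
  simpa [L] using h.symm


lemma exp_smul_one_matrix (c : ℂ) :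
    exp (c • (1 : Matrix (Fin d) (Fin d) ℂ)) = Complex.exp c • 1 := by
  letI : SeminormedRing (Matrix (Fin d) (Fin d) ℂ) := Matrix.linftyOpSemiNormedRing
  letI : NormedRing (Matrix (Fin d) (Fin d) ℂ) := Matrix.linftyOpNormedRing
  letI : NormedAlgebra ℂ (Matrix (Fin d) (Fin d) ℂ) := Matrix.linftyOpNormedAlgebra
  have := (algebraMap_exp_comm (𝕂 := ℂ) (𝔸 := Matrix (Fin d) (Fin d) ℂ) c).symm
  rw [Complex.exp_eq_exp_ℂ]
  simp [Algebra.algebraMap_eq_smul_one] at this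
  exact this

lemma exp_mulVec_genEig (M : Matrix (Fin d) (Fin d) ℂ) (μ : ℂ) (n : ℕ) (v : Fin d → ℂ)
    (hv : ((M - μ • 1) ^ n).mulVec v = 0) (c : ℂ) :
    (exp (c • M)).mulVec v =
      Complex.exp (c * μ) •
        ∑ k ∈ Finset.range n, ((c ^ k / (k.factorial : ℂ))) • ((M - μ • 1) ^ k).mulVec v := by
  set N : Matrix (Fin d) (Fin d) ℂ := M - μ • 1 with hN
  have hsplit : c • M = (c * μ) • (1 : Matrix (Fin d) (Fin d) ℂ) + c • N := by
    rw [hN, smul_sub]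
    module
  have hcomm : Commute ((c * μ) • (1 : Matrix (Fin d) (Fin d) ℂ)) (c • N) := by
    simpa using ((Commute.one_left N).smul_left (c * μ)).smul_right c
  rw [hsplit, Matrix.exp_add_of_commute _ _ hcomm, exp_smul_one_matrix]
  rw [Matrix.smul_mul, Matrix.one_mul, Matrix.smul_mulVec]
  congr 1
  -- now: (exp (c • N)).mulVec v = ∑ k in range n, (c^k/k!) • (N^k).mulVec v
  rw [exp_mulVec_tsum]
  have hzero : ∀ k, n ≤ k → ((c • N) ^ k).mulVec v = 0 := by
    intro k hk
    have : (N ^ k).mulVec v = 0 := by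
      obtain ⟨j, rfl⟩ := Nat.exists_eq_add_of_le hk
      rw [add_comm, pow_add, ← Matrix.mulVec_mulVec, hv, Matrix.mulVec_zero]
    rw [smul_pow, Matrix.smul_mulVec, this, smul_zero]
  rw [tsum_eq_sum (s := Finset.range n) (fun k hk => by
    rw [hzero k (by simpa using hk), smul_zero])]
  refine Finset.sum_congr rfl fun k hk => ?_
  rw [smul_pow, Matrix.smul_mulVec, smul_smul]
  congr 1
  field_simp

lemma exp_mulVec_decay (M : Matrix (Fin d) (Fin d) ℂ) {ε : ℝ} (hε : 0 < ε)
    (hroots : ∀ μ : ℂ, M.charpoly.IsRoot μ → μ.re ≤ -(2 * ε)) (v : Fin d → ℂ) :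
    ∃ C : ℝ, 0 ≤ C ∧ ∀ t : ℝ, 0 ≤ t →
      ‖(exp ((t : ℂ) • M)).mulVec v‖ ≤ C * Real.exp (-(ε * t)) := by
  set f : Module.End ℂ (Fin d → ℂ) := Matrix.toLin' M with hf
  have htop := Module.End.iSup_maxGenEigenspace_eq_top (K := ℂ) (V := Fin d → ℂ) f
  have hv : v ∈ ⨆ μ : ℂ, f.maxGenEigenspace μ := htop ▸ Submodule.mem_top
  refine Submodule.iSup_induction _ (motive := fun x => ∃ C : ℝ, 0 ≤ C ∧ ∀ t : ℝ, 0 ≤ t →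
      ‖(exp ((t : ℂ) • M)).mulVec x‖ ≤ C * Real.exp (-(ε * t))) hv ?_ ?_ ?_
  · -- main case
    intro μ x hx
    rcases eq_or_ne x 0 with rfl | hx0
    · exact ⟨0, le_refl 0, fun t _ => by simp⟩
    obtain ⟨k, hk⟩ := (Module.End.mem_maxGenEigenspace _ _ _).mp hx
    -- μ is a root of the charpoly
    have hroot : M.charpoly.IsRoot μ := by
      have heig : f.HasEigenvalue μ := by
        apply Module.End.hasEigenvalue_of_hasGenEigenvalue (k := k)
        show f.genEigenspace μ k ≠ ⊥
        exact Submodule.ne_bot_iff _ |>.mpr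
          ⟨x, Module.End.mem_genEigenspace_nat.mpr hk, hx0⟩
      have hmin : (minpoly ℂ f).IsRoot μ :=
        Module.End.isRoot_of_hasEigenvalue heig
      have heq : minpoly ℂ f = minpoly ℂ M :=
        minpoly.algEquiv_eq (Matrix.toLinAlgEquiv' (R := ℂ) (n := Fin d)) M
      rw [heq] at hmin
      exact hmin.dvd (Matrix.minpoly_dvd_charpoly M)
    have hre : μ.re ≤ -(2 * ε) := hroots μ hroot
    -- convert hk to matrix form
    have hk' : ((M - μ • 1) ^ k).mulVec x = 0 := by
      have h1 : Matrix.toLinAlgEquiv' ((M - μ • 1) ^ k) = (f - μ • 1) ^ k := by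
        rw [map_pow, map_sub, _root_.map_smul, _root_.map_one]
        rfl
      calc ((M - μ • 1) ^ k).mulVec x
          = (Matrix.toLinAlgEquiv' ((M - μ • 1) ^ k)) x :=
            (Matrix.toLinAlgEquiv'_apply _ _).symm
        _ = ((f - μ • 1) ^ k) x := by rw [h1]
        _ = 0 := hk
    refine ⟨∑ j ∈ Finset.range k, ε⁻¹ ^ j * ‖((M - μ • 1) ^ j).mulVec x‖,
      Finset.sum_nonneg fun j _ => by positivity, fun t ht => ?_⟩
    rw [exp_mulVec_genEig M μ k x hk' (t : ℂ)]
    rw [norm_smul, Complex.norm_exp]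
    have hre' : ((t : ℂ) * μ).re = t * μ.re := by simp [Complex.mul_re]
    rw [hre']
    calc Real.exp (t * μ.re) * ‖∑ j ∈ Finset.range k,
          ((t : ℂ) ^ j / (j.factorial : ℂ)) • ((M - μ • 1) ^ j).mulVec x‖
        ≤ Real.exp (t * μ.re) * ∑ j ∈ Finset.range k,
            (t ^ j / (j.factorial : ℝ)) * ‖((M - μ • 1) ^ j).mulVec x‖ := by
          refine mul_le_mul_of_nonneg_left ?_ (Real.exp_nonneg _)
          refine (norm_sum_le _ _).trans ?_
          refine Finset.sum_le_sum fun j _ => ?_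
          rw [norm_smul]
          apply mul_le_mul_of_nonneg_right _ (norm_nonneg _)
          rw [norm_div]
          simp only [norm_pow, Complex.norm_natCast, Complex.norm_real, Real.norm_eq_abs]
          rw [abs_of_nonneg ht]
      _ ≤ Real.exp (t * μ.re) * ∑ j ∈ Finset.range k,
            (ε⁻¹ ^ j * Real.exp (ε * t)) * ‖((M - μ • 1) ^ j).mulVec x‖ := by
          refine mul_le_mul_of_nonneg_left (Finset.sum_le_sum fun j _ => ?_) (Real.exp_nonneg _)
          apply mul_le_mul_of_nonneg_right _ (norm_nonneg _)
          have h1 : (ε * t) ^ j / (j.factorial : ℝ) ≤ Real.exp (ε * t) :=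
            Real.pow_div_factorial_le_exp _ (by positivity) j
          have h2 : t ^ j / (j.factorial : ℝ) ≤ ε⁻¹ ^ j * ((ε * t) ^ j / (j.factorial : ℝ)) := by
            rw [mul_pow, mul_div_assoc, ← mul_assoc, ← mul_pow, inv_mul_cancel₀ hε.ne', one_pow, one_mul]
          refine h2.trans ?_
          exact mul_le_mul_of_nonneg_left h1 (by positivity)
      _ ≤ (∑ j ∈ Finset.range k, ε⁻¹ ^ j * ‖((M - μ • 1) ^ j).mulVec x‖)
            * Real.exp (-(ε * t)) := by
          rw [Finset.mul_sum, Finset.sum_mul]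
          refine Finset.sum_le_sum fun j _ => ?_
          have : Real.exp (t * μ.re) * (ε⁻¹ ^ j * Real.exp (ε * t) * ‖((M - μ • 1) ^ j).mulVec x‖)
              = (Real.exp (t * μ.re) * Real.exp (ε * t)) * (ε⁻¹ ^ j * ‖((M - μ • 1) ^ j).mulVec x‖) := by ring
          rw [this]
          have h3 : Real.exp (t * μ.re) * Real.exp (ε * t) ≤ Real.exp (-(ε * t)) := by
            rw [← Real.exp_add, Real.exp_le_exp]
            nlinarith [mul_le_mul_of_nonneg_left hre ht]
          calc Real.exp (t * μ.re) * Real.exp (ε * t) * (ε⁻¹ ^ j * ‖((M - μ • 1) ^ j).mulVec x‖)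
              ≤ Real.exp (-(ε * t)) * (ε⁻¹ ^ j * ‖((M - μ • 1) ^ j).mulVec x‖) :=
                mul_le_mul_of_nonneg_right h3 (by positivity)
            _ = ε⁻¹ ^ j * ‖((M - μ • 1) ^ j).mulVec x‖ * Real.exp (-(ε * t)) := by ring
  · exact ⟨0, le_refl 0, fun t _ => by simp⟩
  · rintro x y ⟨Cx, hCx, hx⟩ ⟨Cy, hCy, hy⟩
    refine ⟨Cx + Cy, by positivity, fun t ht => ?_⟩
    rw [Matrix.mulVec_add, add_mul]
    exact (norm_add_le _ _).trans (add_le_add (hx t ht) (hy t ht))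

lemma exp_mulVec_decay_uniform (M : Matrix (Fin d) (Fin d) ℂ) {ε : ℝ} (hε : 0 < ε)
    (hroots : ∀ μ : ℂ, M.charpoly.IsRoot μ → μ.re ≤ -(2 * ε)) :
    ∃ C : ℝ, 0 ≤ C ∧ ∀ t : ℝ, 0 ≤ t → ∀ v : Fin d → ℂ,
      ‖(exp ((t : ℂ) • M)).mulVec v‖ ≤ C * Real.exp (-(ε * t)) * ‖v‖ := by
  choose C hC0 hC using fun j : Fin d =>
    exp_mulVec_decay M hε hroots (Pi.single j 1)
  refine ⟨∑ j, C j, Finset.sum_nonneg fun j _ => hC0 j, fun t ht v => ?_⟩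
  have hv : v = ∑ j, v j • (Pi.single j (1 : ℂ) : Fin d → ℂ) := by
    funext i
    simp [Finset.sum_apply, Pi.single_apply, eq_comm]
  calc ‖(exp ((t : ℂ) • M)).mulVec v‖
      = ‖∑ j, v j • (exp ((t : ℂ) • M)).mulVec (Pi.single j 1 : Fin d → ℂ)‖ := by
        conv_lhs => rw [hv]
        congr 1
        rw [← Matrix.mulVecLin_apply, map_sum]
        refine Finset.sum_congr rfl fun j _ => ?_
        rw [_root_.map_smul, Matrix.mulVecLin_apply]
    _ ≤ ∑ j, ‖v j • (exp ((t : ℂ) • M)).mulVec (Pi.single j 1)‖ := norm_sum_le _ _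
    _ ≤ ∑ j, ‖v‖ * (C j * Real.exp (-(ε * t))) := by
        refine Finset.sum_le_sum fun j _ => ?_
        rw [norm_smul]
        exact mul_le_mul (norm_le_pi_norm v j) (hC j t ht) (norm_nonneg _) (norm_nonneg _)
    _ = (∑ j, C j) * Real.exp (-(ε * t)) * ‖v‖ := by
        rw [← Finset.mul_sum, ← Finset.sum_mul]
        ring

lemma hurwitz_gap (A : Matrix (Fin d) (Fin d) ℝ) (hHur : IsHurwitz A) :
    ∃ ε : ℝ, 0 < ε ∧ ∀ μ : ℂ, (A.map Complex.ofReal).charpoly.IsRoot μ → μ.re ≤ -(2 * ε) := by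
  set M := A.map Complex.ofReal
  have hne : M.charpoly ≠ 0 := (Matrix.charpoly_monic M).ne_zero
  have hmem : ∀ μ : ℂ, M.charpoly.IsRoot μ → μ ∈ M.charpoly.roots := fun μ h =>
    (Polynomial.mem_roots hne).mpr h
  set S : Finset ℝ := (M.charpoly.roots.map fun μ : ℂ => μ.re).toFinset with hS
  by_cases h : S.Nonempty
  · refine ⟨-(S.max' h) / 2, ?_, fun μ hμ => ?_⟩
    · have hneg : ∀ y ∈ S, y < 0 := by
        intro y hy
        rw [hS, Multiset.mem_toFinset, Multiset.mem_map] at hy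
        obtain ⟨μ, hμ, hre⟩ := hy
        rw [← hre]
        exact hHur μ hμ
      have := hneg _ (S.max'_mem h)
      linarith
    · have : μ.re ∈ S := by
        rw [hS, Multiset.mem_toFinset, Multiset.mem_map]
        exact ⟨μ, hmem μ hμ, rfl⟩
      have := S.le_max' _ this
      linarith
  · refine ⟨1, one_pos, fun μ hμ => absurd ?_ h⟩
    exact ⟨μ.re, by rw [hS, Multiset.mem_toFinset, Multiset.mem_map]; exact ⟨μ, hmem μ hμ, rfl⟩⟩

lemma exp_mulVec_decay_real (A : Matrix (Fin d) (Fin d) ℝ) (hHur : IsHurwitz A) :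
    ∃ C ε : ℝ, 0 ≤ C ∧ 0 < ε ∧ ∀ t : ℝ, 0 ≤ t → ∀ ξ : Fin d → ℝ,
      ‖(exp (t • A)).mulVec ξ‖ ≤ C * Real.exp (-(ε * t)) * ‖ξ‖ := by
  obtain ⟨ε, hε, hroots⟩ := hurwitz_gap A hHur
  obtain ⟨C, hC0, hC⟩ := exp_mulVec_decay_uniform (A.map Complex.ofReal) hε hroots
  refine ⟨C, ε, hC0, hε, fun t ht ξ => ?_⟩
  -- transfer along the embedding ℝ → ℂ
  letI : SeminormedRing (Matrix (Fin d) (Fin d) ℝ) := Matrix.linftyOpSemiNormedRing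
  letI : NormedRing (Matrix (Fin d) (Fin d) ℝ) := Matrix.linftyOpNormedRing
  letI : NormedAlgebra ℝ (Matrix (Fin d) (Fin d) ℝ) := Matrix.linftyOpNormedAlgebra
  letI : NormedAlgebra ℚ (Matrix (Fin d) (Fin d) ℝ) := Matrix.linftyOpNormedAlgebra
  letI : SeminormedRing (Matrix (Fin d) (Fin d) ℂ) := Matrix.linftyOpSemiNormedRing
  letI : NormedRing (Matrix (Fin d) (Fin d) ℂ) := Matrix.linftyOpNormedRing
  letI : NormedAlgebra ℝ (Matrix (Fin d) (Fin d) ℂ) := Matrix.linftyOpNormedAlgebra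
  have hmap : ((exp (t • A)).map Complex.ofReal) = exp ((t : ℂ) • A.map Complex.ofReal) := by
    have h1 : ((exp (t • A)).map Complex.ofReal)
        = exp ((t • A).map Complex.ofReal) := by
      have := map_exp ((Complex.ofRealHom.mapMatrix : Matrix (Fin d) (Fin d) ℝ →+* Matrix (Fin d) (Fin d) ℂ))
        (continuous_id.matrix_map Complex.continuous_ofReal) (t • A)
      simp only [RingHom.mapMatrix_apply] at this
      exact this
    have h2 : ((t • A).map Complex.ofReal) = (t : ℂ) • A.map Complex.ofReal := by
      ext i j
      simp
    rw [h1, h2]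
  have hnorm : ∀ w : Fin d → ℝ, ‖(fun i => (w i : ℂ))‖ = ‖w‖ := fun w => by
    simp [Pi.norm_def, Complex.nnnorm_real]
  have hvec : (fun i => ((((exp (t • A)).mulVec ξ) i : ℝ) : ℂ))
      = (exp ((t : ℂ) • A.map Complex.ofReal)).mulVec (fun i => (ξ i : ℂ)) := by
    rw [← hmap]
    funext i
    simp [Matrix.mulVec, dotProduct]
  calc ‖(exp (t • A)).mulVec ξ‖
      = ‖(exp ((t : ℂ) • A.map Complex.ofReal)).mulVec (fun i => (ξ i : ℂ))‖ := by
        rw [← hvec, hnorm]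
    _ ≤ C * Real.exp (-(ε * t)) * ‖fun i => (ξ i : ℂ)‖ := hC t ht _
    _ = C * Real.exp (-(ε * t)) * ‖ξ‖ := by rw [hnorm]

lemma exp_smul_continuous (A : Matrix (Fin d) (Fin d) ℝ) :
    Continuous fun s : ℝ => exp (s • A) := by
  letI : SeminormedRing (Matrix (Fin d) (Fin d) ℝ) := Matrix.linftyOpSemiNormedRing
  letI : NormedRing (Matrix (Fin d) (Fin d) ℝ) := Matrix.linftyOpNormedRing
  letI : NormedAlgebra ℝ (Matrix (Fin d) (Fin d) ℝ) := Matrix.linftyOpNormedAlgebra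
  letI : NormedAlgebra ℚ (Matrix (Fin d) (Fin d) ℝ) := Matrix.linftyOpNormedAlgebra
  exact exp_continuous.comp (continuous_id.smul continuous_const)

lemma exp_smul_mul (A : Matrix (Fin d) (Fin d) ℝ) (s t : ℝ) :
    exp (s • A) * exp (t • A) = exp ((s + t) • A) := by
  rw [add_smul, Matrix.exp_add_of_commute _ _ (((Commute.refl A).smul_left s).smul_right t)]

lemma exp_smul_mulVec_ne_zero (A : Matrix (Fin d) (Fin d) ℝ) (s : ℝ) {ξ : Fin d → ℝ}
    (hξ : ξ ≠ 0) : (exp (s • A)).mulVec ξ ≠ 0 := by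
  intro h0
  apply hξ
  have h1 : exp ((-s) • A) * exp (s • A) = 1 := by
    rw [exp_smul_mul, neg_add_cancel, zero_smul, exp_zero]
  calc ξ = (1 : Matrix (Fin d) (Fin d) ℝ).mulVec ξ := by rw [Matrix.one_mulVec]
    _ = (exp ((-s) • A)).mulVec ((exp (s • A)).mulVec ξ) := by
        rw [Matrix.mulVec_mulVec, h1]
    _ = 0 := by rw [h0, Matrix.mulVec_zero]

lemma quad_transpose_mul (B : Matrix (Fin d) (Fin d) ℝ) (ξ ζ : Fin d → ℝ) :
    ξ ⬝ᵥ (Bᵀ * B).mulVec ζ = (B.mulVec ξ) ⬝ᵥ (B.mulVec ζ) := by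
  rw [← Matrix.mulVec_mulVec, dotProduct_mulVec, Matrix.vecMul_transpose]

lemma dot_self_nonneg (v : Fin d → ℝ) : 0 ≤ v ⬝ᵥ v := by
  simpa using dotProduct_star_self_nonneg v

lemma dot_self_pos {v : Fin d → ℝ} (hv : v ≠ 0) : 0 < v ⬝ᵥ v := by
  have := (dotProduct_star_self_pos_iff (v := v)).mpr hv
  simpa using this

end Aux

theorem stmt_1 {d : ℕ} (A : Matrix (Fin d) (Fin d) ℝ) (hHur : IsHurwitz A) :
    ∃ (P : Matrix (Fin d) (Fin d) ℝ) (lam : ℝ), P.PosDef ∧ 0 < lam ∧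
      ∀ t : ℝ, 0 ≤ t → ∀ ξ : Fin d → ℝ,
        (NormedSpace.exp (t • A)).mulVec ξ ⬝ᵥ P.mulVec ((NormedSpace.exp (t • A)).mulVec ξ)
          ≤ Real.exp (-lam * t) * (ξ ⬝ᵥ P.mulVec ξ) := by
  classical
  obtain ⟨C, ε, hC0, hε, hdecay⟩ := exp_mulVec_decay_real A hHur
  letI : NormedAddCommGroup (Matrix (Fin d) (Fin d) ℝ) := Matrix.normedAddCommGroup
  letI : NormedSpace ℝ (Matrix (Fin d) (Fin d) ℝ) := Matrix.normedSpace
  letI : ContinuousENorm (Matrix (Fin d) (Fin d) ℝ) := SeminormedAddGroup.toContinuousENorm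
  set E : ℝ → Matrix (Fin d) (Fin d) ℝ := fun s => exp (s • A) with hEdef
  have hEcont : Continuous E := exp_smul_continuous A
  set g : ℝ → Matrix (Fin d) (Fin d) ℝ :=
    fun s => Real.exp (ε * s) • ((E s)ᵀ * E s) with hgdef
  have hgcont : Continuous g := by
    exact ((Real.continuous_exp.comp (continuous_const.mul continuous_id)).smul
      ((hEcont.matrix_transpose).matrix_mul hEcont))
  -- entrywise bound on `E s`
  have hEntry : ∀ s : ℝ, 0 ≤ s → ∀ i j, |E s i j| ≤ C * Real.exp (-(ε * s)) := by
    intro s hs i j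
    have h1 : E s i j = ((E s).mulVec (Pi.single j 1)) i := by
      simp [Matrix.mulVec_single]
    rw [h1, ← Real.norm_eq_abs]
    refine (norm_le_pi_norm _ i).trans ?_
    have h3 := hdecay s hs (Pi.single j 1)
    have h4 : ‖(Pi.single j 1 : Fin d → ℝ)‖ = 1 := by
      rw [Pi.norm_single]
      exact norm_one
    rw [h4, mul_one] at h3
    exact h3
  -- norm bound on `g`
  have hgnorm : ∀ s : ℝ, 0 ≤ s → ‖g s‖ ≤ (d * C ^ 2) * Real.exp (-(ε * s)) := by
    intro s hs
    have hnn : (0:ℝ) ≤ d * C ^ 2 * Real.exp (-(ε * s)) := by positivity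
    rw [hgdef]
    simp only
    rw [norm_smul, Real.norm_eq_abs, abs_of_nonneg (Real.exp_pos _).le]
    have hentry : ∀ i j, |((E s)ᵀ * E s) i j| ≤ d * (C * Real.exp (-(ε * s)))^2 := by
      intro i j
      rw [Matrix.mul_apply]
      calc |∑ k, (E s)ᵀ i k * E s k j| ≤ ∑ k, |(E s)ᵀ i k * E s k j| :=
            Finset.abs_sum_le_sum_abs _ _
        _ ≤ ∑ _k : Fin d, (C * Real.exp (-(ε * s)))^2 := by
            refine Finset.sum_le_sum fun k _ => ?_
            rw [abs_mul, Matrix.transpose_apply, sq]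
            exact mul_le_mul (hEntry s hs k i) (hEntry s hs k j) (abs_nonneg _)
              (le_trans (abs_nonneg _) (hEntry s hs k i))
        _ = d * (C * Real.exp (-(ε * s)))^2 := by
            rw [Finset.sum_const, Finset.card_univ, Fintype.card_fin, nsmul_eq_mul]
    have hmatnorm : ‖(E s)ᵀ * E s‖ ≤ d * (C * Real.exp (-(ε * s)))^2 := by
      refine (pi_norm_le_iff_of_nonneg (by positivity)).mpr fun i => ?_
      refine (pi_norm_le_iff_of_nonneg (by positivity)).mpr fun j => ?_
      exact hentry i j
    calc Real.exp (ε * s) * ‖(E s)ᵀ * E s‖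
        ≤ Real.exp (ε * s) * (d * (C * Real.exp (-(ε * s)))^2) :=
          mul_le_mul_of_nonneg_left hmatnorm (Real.exp_pos _).le
      _ = (d * C ^ 2) * (Real.exp (ε * s) * Real.exp (-(ε * s)) * Real.exp (-(ε * s))) := by
          ring
      _ = (d * C ^ 2) * Real.exp (-(ε * s)) := by
          rw [← Real.exp_add, add_neg_cancel, Real.exp_zero, one_mul]
  have hgInt : IntegrableOn g (Set.Ioi (0:ℝ)) := by
    refine Integrable.mono' (g := fun s => (d * C ^ 2) * Real.exp (-ε * s)) ?_ ?_ ?_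
    · exact (exp_neg_integrableOn_Ioi 0 hε).const_mul _
    · haveI : TopologicalSpace.PseudoMetrizableSpace (Matrix (Fin d) (Fin d) ℝ) :=
        TopologicalSpace.pseudoMetrizableSpace_pi
      exact hgcont.aestronglyMeasurable.restrict
    · filter_upwards [ae_restrict_mem measurableSet_Ioi] with s hs
      rw [neg_mul]
      exact hgnorm s (le_of_lt hs)
  set P : Matrix (Fin d) (Fin d) ℝ := ∫ s in Set.Ioi (0:ℝ), g s with hPdef
  -- quadratic form of P
  have quadCLM : ∀ ξ ζ : Fin d → ℝ, ∃ L : Matrix (Fin d) (Fin d) ℝ →L[ℝ] ℝ,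
      ∀ Q, L Q = ξ ⬝ᵥ Q.mulVec ζ := by
    intro ξ ζ
    refine ⟨LinearMap.toContinuousLinearMap
      { toFun := fun Q => ξ ⬝ᵥ Q.mulVec ζ
        map_add' := fun Q R => by simp [Matrix.add_mulVec, dotProduct_add]
        map_smul' := fun c Q => by
          simp [Matrix.smul_mulVec, dotProduct_smul] }, fun Q => rfl⟩
  have hquad : ∀ ξ ζ : Fin d → ℝ, ξ ⬝ᵥ P.mulVec ζ =
      ∫ s in Set.Ioi (0:ℝ), Real.exp (ε * s) * (ξ ⬝ᵥ ((E s)ᵀ * E s).mulVec ζ) := by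
    intro ξ ζ
    obtain ⟨L, hL⟩ := quadCLM ξ ζ
    rw [hPdef, ← hL]
    refine (ContinuousLinearMap.integral_comp_comm L hgInt).symm.trans ?_
    refine setIntegral_congr_fun measurableSet_Ioi fun s _ => ?_
    refine (hL (g s)).trans ?_
    rw [hgdef]
    simp only
    rw [Matrix.smul_mulVec, dotProduct_smul, smul_eq_mul]
  have hquad' : ∀ ξ : Fin d → ℝ, ξ ⬝ᵥ P.mulVec ξ =
      ∫ s in Set.Ioi (0:ℝ), Real.exp (ε * s) * ((E s).mulVec ξ ⬝ᵥ (E s).mulVec ξ) := by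
    intro ξ
    rw [hquad ξ ξ]
    refine setIntegral_congr_fun measurableSet_Ioi fun s _ => ?_
    rw [quad_transpose_mul]
  -- integrand facts
  have hIntegrand : ∀ ξ : Fin d → ℝ,
      IntegrableOn (fun s => Real.exp (ε * s) * ((E s).mulVec ξ ⬝ᵥ (E s).mulVec ξ))
        (Set.Ioi (0:ℝ)) := by
    intro ξ
    obtain ⟨L, hL⟩ := quadCLM ξ ξ
    refine (L.integrable_comp hgInt).congr (ae_of_all _ fun s => ?_)
    show L (g s) = Real.exp (ε * s) * ((E s).mulVec ξ ⬝ᵥ (E s).mulVec ξ)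
    refine (hL (g s)).trans ?_
    rw [hgdef]
    simp only
    rw [Matrix.smul_mulVec, dotProduct_smul, smul_eq_mul, quad_transpose_mul]

  -- nonnegativity / positivity of the integrand
  have hnonneg : ∀ ξ : Fin d → ℝ, ∀ s : ℝ,
      0 ≤ Real.exp (ε * s) * ((E s).mulVec ξ ⬝ᵥ (E s).mulVec ξ) := fun ξ s =>
    mul_nonneg (Real.exp_pos _).le (dot_self_nonneg _)
  have hpos : ∀ ξ : Fin d → ℝ, ξ ≠ 0 → 0 < ξ ⬝ᵥ P.mulVec ξ := by
    intro ξ hξ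
    rw [hquad' ξ]
    rw [setIntegral_pos_iff_support_of_nonneg_ae (ae_of_all _ (hnonneg ξ)) (hIntegrand ξ)]
    have hsub : Set.Ioi (0:ℝ) ⊆
        Function.support (fun s => Real.exp (ε * s) * ((E s).mulVec ξ ⬝ᵥ (E s).mulVec ξ))
          ∩ Set.Ioi 0 := by
      intro s hs
      refine ⟨?_, hs⟩
      have h1 : (E s).mulVec ξ ≠ 0 := exp_smul_mulVec_ne_zero A s hξ
      exact (mul_pos (Real.exp_pos _) (dot_self_pos h1)).ne'
    have hle := measure_mono (μ := (volume : MeasureTheory.Measure ℝ)) hsub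
    rw [Real.volume_Ioi] at hle
    exact lt_of_lt_of_le ENNReal.zero_lt_top hle
  -- symmetry
  have hsymquad : ∀ ξ ζ : Fin d → ℝ, ξ ⬝ᵥ P.mulVec ζ = ζ ⬝ᵥ P.mulVec ξ := by
    intro ξ ζ
    rw [hquad ξ ζ, hquad ζ ξ]
    refine setIntegral_congr_fun measurableSet_Ioi fun s _ => ?_
    rw [quad_transpose_mul, quad_transpose_mul, dotProduct_comm]
  have hherm : P.IsHermitian := by
    refine Matrix.IsHermitian.ext fun i j => ?_
    have h1 := hsymquad (Pi.single j 1) (Pi.single i 1)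
    simpa [Matrix.mulVec_single, single_dotProduct] using h1
  refine ⟨P, ε, Matrix.PosDef.of_dotProduct_mulVec_pos hherm fun ξ hξ => by simpa using hpos ξ hξ, hε, fun t ht ξ => ?_⟩
  -- the decay estimate
  set w : Fin d → ℝ := (exp (t • A)).mulVec ξ with hw
  have hEw : ∀ s : ℝ, (E s).mulVec w = (E (s + t)).mulVec ξ := by
    intro s
    rw [hw]
    show (exp (s • A)).mulVec ((exp (t • A)).mulVec ξ) = (exp ((s + t) • A)).mulVec ξ
    rw [Matrix.mulVec_mulVec, exp_smul_mul A s t]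
  have key : w ⬝ᵥ P.mulVec w
      = ∫ s in Set.Ioi (0:ℝ), Real.exp (-(ε * t)) *
          (Real.exp (ε * (s + t)) * ((E (s + t)).mulVec ξ ⬝ᵥ (E (s + t)).mulVec ξ)) := by
    rw [hquad' w]
    refine setIntegral_congr_fun measurableSet_Ioi fun s _ => ?_
    rw [hEw s]
    rw [← mul_assoc, ← Real.exp_add]
    ring_nf
  set G : ℝ → ℝ := fun u => Real.exp (ε * u) * ((E u).mulVec ξ ⬝ᵥ (E u).mulVec ξ) with hG
  have hshift : (∫ s in Set.Ioi (0:ℝ), G (s + t)) = ∫ u in Set.Ioi t, G u := by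
    have hmp := MeasureTheory.measurePreserving_add_right (volume : Measure ℝ) t
    have hemb : MeasurableEmbedding (fun x : ℝ => x + t) := measurableEmbedding_addRight t
    have := hmp.setIntegral_preimage_emb hemb G (Set.Ioi t)
    rw [← this]
    congr 1
    ext x
    simp
  have hmono : (∫ u in Set.Ioi t, G u) ≤ ∫ u in Set.Ioi (0:ℝ), G u := by
    refine setIntegral_mono_set (hIntegrand ξ) (ae_of_all _ (hnonneg ξ)) ?_
    exact HasSubset.Subset.eventuallyLE (Set.Ioi_subset_Ioi ht)
  calc w ⬝ᵥ P.mulVec w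
      = Real.exp (-(ε * t)) * ∫ s in Set.Ioi (0:ℝ), G (s + t) := by
        rw [key, MeasureTheory.integral_const_mul]
    _ ≤ Real.exp (-(ε * t)) * ∫ u in Set.Ioi (0:ℝ), G u := by
        rw [hshift]
        exact mul_le_mul_of_nonneg_left hmono (Real.exp_pos _).le
    _ = Real.exp (-ε * t) * (ξ ⬝ᵥ P.mulVec ξ) := by
        rw [hquad' ξ, neg_mul]
end

section
/- Let A, P, Q ∈ ℝ^{d×d} with P and Q symmetric positive definite, let ε ∈ ℝ, and suppose (A − ε·I_d)ᵀP + P(A − ε·I_d) + Q = 0. Then every function x : ℝ → ℝ^d satisfying HasDerivAt x (A.mulVec (x t)) t for all t obeys (x t)ᵀ P (x t) ≤ exp((2ε − λ_min(Q)/λ_max(P))·t) · (x 0)ᵀ P (x 0) for all t ≥ 0. -/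
open Matrix

lemma quad_bounds {d : ℕ} [Nonempty (Fin d)] (M : Matrix (Fin d) (Fin d) ℝ)
    (hM : M.IsHermitian) (y : Fin d → ℝ) :
    (⨅ i, hM.eigenvalues i) * (y ⬝ᵥ y) ≤ y ⬝ᵥ M *ᵥ y ∧
      y ⬝ᵥ M *ᵥ y ≤ (⨆ i, hM.eigenvalues i) * (y ⬝ᵥ y) := by
  classical
  set U : Matrix (Fin d) (Fin d) ℝ := (hM.eigenvectorUnitary : Matrix (Fin d) (Fin d) ℝ) with hU
  set z : Fin d → ℝ := star U *ᵥ y with hz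
  have hsU : star U = Uᵀ := by
    rw [Matrix.star_eq_conjTranspose, Matrix.conjTranspose_eq_transpose_of_trivial]
  have hUU : U * star U = 1 := (Matrix.mem_unitaryGroup_iff).mp hM.eigenvectorUnitary.2
  have hUU' : star U * U = 1 := (Matrix.mem_unitaryGroup_iff').mp hM.eigenvectorUnitary.2
  have hyU : y ᵥ* U = z := by rw [hz, hsU, Matrix.mulVec_transpose]
  have h1 : y ⬝ᵥ M *ᵥ y = ∑ i, hM.eigenvalues i * (z i) ^ 2 := by
    conv_lhs => rw [hM.spectral_theorem, Unitary.conjStarAlgAut_apply, ← hU]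
    rw [← Matrix.mulVec_mulVec, ← Matrix.mulVec_mulVec, Matrix.dotProduct_mulVec, hyU]
    simp [dotProduct, Matrix.mulVec_diagonal]
    ring_nf
    exact Finset.sum_congr rfl fun i _ => by rw [← hz]; ring
  have h2 : y ⬝ᵥ y = ∑ i, (z i) ^ 2 := by
    have hy : U *ᵥ z = y := by rw [hz, Matrix.mulVec_mulVec, hUU, Matrix.one_mulVec]
    have : U *ᵥ z = z ᵥ* Uᵀ := (Matrix.vecMul_transpose U z).symm
    calc y ⬝ᵥ y = (U *ᵥ z) ⬝ᵥ (U *ᵥ z) := by rw [hy]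
    _ = ((z ᵥ* Uᵀ) ᵥ* U) ⬝ᵥ z := by rw [Matrix.dotProduct_mulVec, this]
    _ = ∑ i, (z i)^2 := by
        rw [Matrix.vecMul_vecMul, ← hsU, hUU', Matrix.vecMul_one]
        simp [dotProduct, sq]
  constructor
  · rw [h1, h2, Finset.mul_sum]
    refine Finset.sum_le_sum fun i _ => ?_
    exact mul_le_mul_of_nonneg_right (ciInf_le (Finite.bddBelow_range _) i) (sq_nonneg _)
  · rw [h1, h2, Finset.mul_sum]
    refine Finset.sum_le_sum fun i _ => ?_
    exact mul_le_mul_of_nonneg_right (le_ciSup (Finite.bddAbove_range _) i) (sq_nonneg _)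


theorem stmt_6 {d : ℕ} (A P Q : Matrix (Fin d) (Fin d) ℝ) (ε : ℝ)
    (hP : P.PosDef) (hQ : Q.PosDef)
    (hLyap : (A - ε • (1 : Matrix (Fin d) (Fin d) ℝ))ᵀ * P +
        P * (A - ε • (1 : Matrix (Fin d) (Fin d) ℝ)) + Q = 0) :
    ∀ x : ℝ → Fin d → ℝ, (∀ t : ℝ, HasDerivAt x (A.mulVec (x t)) t) →
      ∀ t : ℝ, 0 ≤ t →
        x t ⬝ᵥ P.mulVec (x t) ≤
          Real.exp ((2 * ε - (⨅ i, hQ.1.eigenvalues i) / (⨆ i, hP.1.eigenvalues i)) * t) *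
            (x 0 ⬝ᵥ P.mulVec (x 0)) := by
  intro x hx t ht
  rcases Nat.eq_zero_or_pos d with hd | hd
  · subst hd
    simp [dotProduct]
  have : Nonempty (Fin d) := ⟨⟨0, hd⟩⟩
  set lQ := ⨅ i, hQ.1.eigenvalues i with hlQ
  set lP := ⨆ i, hP.1.eigenvalues i with hlP
  set c : ℝ := 2 * ε - lQ / lP with hc
  clear_value c
  have hlQpos : 0 < lQ := by
    obtain ⟨i, hi⟩ := exists_eq_ciInf_of_finite (f := hQ.1.eigenvalues)
    rw [hlQ, ← hi]; exact hQ.eigenvalues_pos i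
  have hlPpos : 0 < lP := by
    have := hP.eigenvalues_pos (Classical.arbitrary (Fin d))
    exact lt_of_lt_of_le this (le_ciSup (Finite.bddAbove_range _) _)
  -- Lyapunov identity
  have hAP : Aᵀ * P + P * A = (2 * ε) • P - Q := by
    have h := hLyap
    simp only [Matrix.transpose_sub, Matrix.transpose_smul, Matrix.transpose_one,
      Matrix.sub_mul, Matrix.mul_sub, Matrix.smul_mul, Matrix.mul_smul,
      Matrix.one_mul, Matrix.mul_one] at h
    have h3 : Aᵀ * P + P * A - ((2 * ε) • P - Q) = 0 := by
      rw [two_mul, add_smul, ← h]; abel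
    exact sub_eq_zero.mp h3
  -- value function and its derivative
  set V : ℝ → ℝ := fun s => x s ⬝ᵥ P *ᵥ x s with hV
  have hVd : ∀ s, HasDerivAt V ((A *ᵥ x s) ⬝ᵥ P *ᵥ x s + x s ⬝ᵥ P *ᵥ (A *ᵥ x s)) s := by
    intro s
    have hco : ∀ i, HasDerivAt (fun u => x u i) ((A *ᵥ x s) i) s :=
      fun i => hasDerivAt_pi.1 (hx s) i
    have hPx : ∀ i, HasDerivAt (fun u => (P *ᵥ x u) i) ((P *ᵥ (A *ᵥ x s)) i) s := by
      intro i
      simpa [Matrix.mulVec, dotProduct] using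
        HasDerivAt.fun_sum (fun j _ => (hco j).const_mul (P i j))
    have h : HasDerivAt (fun u => ∑ i, x u i * (P *ᵥ x u) i) _ s := HasDerivAt.fun_sum (fun i (_ : i ∈ Finset.univ) => (hco i).mul (hPx i))
    have heq : (fun u => ∑ i, x u i * (P *ᵥ x u) i) = V := by
      funext u; simp [hV, dotProduct]
    rw [heq] at h
    convert h using 1
    simp [dotProduct, Finset.sum_add_distrib]
  -- derivative bound
  have hbound : ∀ s, (A *ᵥ x s) ⬝ᵥ P *ᵥ x s + x s ⬝ᵥ P *ᵥ (A *ᵥ x s) ≤ c * V s := by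
    intro s
    set y := x s with hy
    have hkey : (A *ᵥ y) ⬝ᵥ P *ᵥ y + y ⬝ᵥ P *ᵥ (A *ᵥ y)
        = y ⬝ᵥ ((Aᵀ * P + P * A) *ᵥ y) := by
      rw [Matrix.add_mulVec, dotProduct_add, ← Matrix.mulVec_mulVec,
        ← Matrix.mulVec_mulVec]
      congr 1
      rw [Matrix.dotProduct_mulVec y, Matrix.vecMul_transpose, dotProduct_comm]
    have hQge : lQ / lP * (y ⬝ᵥ P *ᵥ y) ≤ y ⬝ᵥ Q *ᵥ y := by
      have h1 := (quad_bounds Q hQ.1 y).1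
      have h2 := (quad_bounds P hP.1 y).2
      rw [← hlQ] at h1
      rw [← hlP] at h2
      rw [div_mul_eq_mul_div, div_le_iff₀ hlPpos]
      calc lQ * (y ⬝ᵥ P *ᵥ y) ≤ lQ * (lP * (y ⬝ᵥ y)) :=
            mul_le_mul_of_nonneg_left h2 hlQpos.le
      _ = lQ * (y ⬝ᵥ y) * lP := by ring
      _ ≤ (y ⬝ᵥ Q *ᵥ y) * lP := mul_le_mul_of_nonneg_right h1 hlPpos.le
    rw [hkey, hAP, Matrix.sub_mulVec, dotProduct_sub, Matrix.smul_mulVec,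
      dotProduct_smul]
    have hcv : c * V s = 2 * ε * (y ⬝ᵥ P *ᵥ y) - lQ / lP * (y ⬝ᵥ P *ᵥ y) := by
      rw [hc, hV]; ring
    rw [hcv]
    simpa using sub_le_sub_left hQge (2 * ε * (y ⬝ᵥ P *ᵥ y))
  show V t ≤ Real.exp (c * t) * V 0
  clear_value V
  -- monotonicity of exp(-c s) * V s
  set g : ℝ → ℝ := fun s => Real.exp (-c * s) * V s with hg
  have hgd : ∀ s, HasDerivAt g (Real.exp (-c * s) * (-c * V s +
      ((A *ᵥ x s) ⬝ᵥ P *ᵥ x s + x s ⬝ᵥ P *ᵥ (A *ᵥ x s)))) s := by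
    intro s
    have he : HasDerivAt (fun u => Real.exp (-c * u)) (Real.exp (-c * s) * -c) s := by
      simpa using ((hasDerivAt_id s).const_mul (-c)).exp
    have h : HasDerivAt (fun u => Real.exp (-c * u) * V u) _ s := he.mul (hVd s)
    rw [hg]
    convert h using 1
    ring
  have hmono : Antitone g := by
    refine antitone_of_deriv_nonpos (fun s => (hgd s).differentiableAt) fun s => ?_
    rw [(hgd s).deriv]
    have h1 : -c * V s + ((A *ᵥ x s) ⬝ᵥ P *ᵥ x s + x s ⬝ᵥ P *ᵥ (A *ᵥ x s)) ≤ 0 := by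
      have := hbound s
      linarith
    exact mul_nonpos_of_nonneg_of_nonpos (Real.exp_nonneg _) h1
  have hgt := hmono ht
  rw [hg] at hgt
  simp only [mul_zero, Real.exp_zero, one_mul] at hgt
  have hzero : c * t + -c * t = 0 := by ring
  calc V t = Real.exp (c * t) * (Real.exp (-c * t) * V t) := by
        rw [← mul_assoc, ← Real.exp_add, hzero, Real.exp_zero, one_mul]
  _ ≤ Real.exp (c * t) * V 0 :=
        mul_le_mul_of_nonneg_left hgt (Real.exp_nonneg _)
end

section
/- Let k ∈ ℕ and for each j ∈ {0, 1, …, k} let A_j ∈ ℝ^{d×d}, let P_j ∈ ℝ^{d×d} be symmetric positive definite, and let λ_j ∈ ℝ be such that for all t ≥ 0 and all ξ ∈ ℝ^d, (exp(t·A_j)·ξ)ᵀ P_j (exp(t·A_j)·ξ) ≤ exp(−λ_j·t)·ξᵀP_jξ. For each j ∈ {0, …, k−1} let μ_j ≥ 1 satisfy ξᵀP_{j+1}ξ ≤ μ_j · ξᵀP_jξ for all ξ ∈ ℝ^d. Let t_0, …, t_k ≥ 0 be durations and define the trajectory x_0 ∈ ℝ^d arbitrary, x_{j+1} := exp(t_j·A_j)·x_j.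 Then x_{k+1}ᵀ P_k x_{k+1} ≤ exp(−∑_{j=0}^{k} λ_j·t_j) · (∏_{j=0}^{k−1} μ_j) · x_0ᵀ P_0 x_0. -/
open Matrix

private lemma aux9 (d : ℕ) (k : ℕ) :
    ∀ (A P : Fin (k + 1) → Matrix (Fin d) (Fin d) ℝ) (lam : Fin (k + 1) → ℝ),
    (∀ j, (P j).PosDef) →
    (∀ j, ∀ t : ℝ, 0 ≤ t → ∀ ξ : Fin d → ℝ,
      (NormedSpace.exp (t • A j)).mulVec ξ ⬝ᵥ
          (P j).mulVec ((NormedSpace.exp (t • A j)).mulVec ξ)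
        ≤ Real.exp (-lam j * t) * (ξ ⬝ᵥ (P j).mulVec ξ)) →
    ∀ (μ : Fin k → ℝ), (∀ j, 1 ≤ μ j) →
    (∀ j : Fin k, ∀ ξ : Fin d → ℝ,
      ξ ⬝ᵥ (P j.succ).mulVec ξ ≤ μ j * (ξ ⬝ᵥ (P j.castSucc).mulVec ξ)) →
    ∀ (t : Fin (k + 1) → ℝ), (∀ j, 0 ≤ t j) →
    ∀ (x : ℕ → Fin d → ℝ),
    (∀ j : Fin (k + 1), x (j + 1) = (NormedSpace.exp (t j • A j)).mulVec (x j)) →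
    x (k + 1) ⬝ᵥ (P (Fin.last k)).mulVec (x (k + 1)) ≤
      Real.exp (-(∑ j, lam j * t j)) * (∏ j, μ j) * (x 0 ⬝ᵥ (P 0).mulVec (x 0)) := by
  induction k with
  | zero =>
    intro A P lam hP hdecay μ hμ1 hμ t ht x hx
    have h0 := hx 0
    simp only [Fin.val_zero, zero_add] at h0
    simp only [Fin.last_zero, Fin.sum_univ_succ, Fin.sum_univ_zero, add_zero, Fin.prod_univ_zero, mul_one, neg_mul]
    rw [h0]
    simpa [neg_mul] using hdecay 0 (t 0) (ht 0) (x 0)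
  | succ n ih =>
    intro A P lam hP hdecay μ hμ1 hμ t ht x hx
    have hIH := ih (fun j => A j.castSucc) (fun j => P j.castSucc)
      (fun j => lam j.castSucc) (fun j => hP j.castSucc)
      (fun j => hdecay j.castSucc)
      (fun j => μ j.castSucc) (fun j => hμ1 j.castSucc)
      (by
        intro j ξ
        have := hμ j.castSucc ξ
        rw [Fin.succ_castSucc] at this
        exact this)
      (fun j => t j.castSucc) (fun j => ht j.castSucc) x
      (by
        intro j
        have := hx j.castSucc
        simpa using this)
    -- step from x (n+1) to x (n+2)
    have hlast := hx (Fin.last (n + 1))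
    simp only [Fin.val_last] at hlast
    have step1 : x (n + 1 + 1) ⬝ᵥ (P (Fin.last (n + 1))).mulVec (x (n + 1 + 1)) ≤
        Real.exp (-lam (Fin.last (n + 1)) * t (Fin.last (n + 1))) *
          (x (n + 1) ⬝ᵥ (P (Fin.last (n + 1))).mulVec (x (n + 1))) := by
      rw [hlast]
      exact hdecay (Fin.last (n + 1)) (t (Fin.last (n + 1))) (ht _) (x (n + 1))
    have step2 : x (n + 1) ⬝ᵥ (P (Fin.last (n + 1))).mulVec (x (n + 1)) ≤
        μ (Fin.last n) * (x (n + 1) ⬝ᵥ (P (Fin.last n).castSucc).mulVec (x (n + 1))) := by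
      have := hμ (Fin.last n) (x (n + 1))
      simpa [Fin.succ_last] using this
    have hP00 : ((fun j : Fin (n + 1) => P j.castSucc) 0) = P 0 := by
      simp
    rw [Fin.castSucc_zero] at hIH
    have epos : (0:ℝ) < Real.exp (-lam (Fin.last (n + 1)) * t (Fin.last (n + 1))) :=
      Real.exp_pos _
    have μpos : (0:ℝ) < μ (Fin.last n) := lt_of_lt_of_le one_pos (hμ1 _)
    calc x (n + 1 + 1) ⬝ᵥ (P (Fin.last (n + 1))).mulVec (x (n + 1 + 1))
        ≤ Real.exp (-lam (Fin.last (n + 1)) * t (Fin.last (n + 1))) *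
          (x (n + 1) ⬝ᵥ (P (Fin.last (n + 1))).mulVec (x (n + 1))) := step1
      _ ≤ Real.exp (-lam (Fin.last (n + 1)) * t (Fin.last (n + 1))) *
          (μ (Fin.last n) * (x (n + 1) ⬝ᵥ (P (Fin.last n).castSucc).mulVec (x (n + 1)))) := by
          exact mul_le_mul_of_nonneg_left step2 epos.le
      _ ≤ Real.exp (-lam (Fin.last (n + 1)) * t (Fin.last (n + 1))) *
          (μ (Fin.last n) *
            (Real.exp (-(∑ j : Fin (n + 1), lam j.castSucc * t j.castSucc)) *
              (∏ j : Fin n, μ j.castSucc) * (x 0 ⬝ᵥ (P 0).mulVec (x 0)))) := by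
          apply mul_le_mul_of_nonneg_left _ epos.le
          exact mul_le_mul_of_nonneg_left hIH μpos.le
      _ = Real.exp (-(∑ j, lam j * t j)) * (∏ j, μ j) * (x 0 ⬝ᵥ (P 0).mulVec (x 0)) := by
          rw [Fin.sum_univ_castSucc (f := fun j => lam j * t j),
            Fin.prod_univ_castSucc (f := μ), neg_add, Real.exp_add]
          ring

theorem stmt_9 {d k : ℕ}
    (A : Fin (k + 1) → Matrix (Fin d) (Fin d) ℝ)
    (P : Fin (k + 1) → Matrix (Fin d) (Fin d) ℝ)
    (lam : Fin (k + 1) → ℝ)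
    (hP : ∀ j, (P j).PosDef)
    (hdecay : ∀ j, ∀ t : ℝ, 0 ≤ t → ∀ ξ : Fin d → ℝ,
      (NormedSpace.exp (t • A j)).mulVec ξ ⬝ᵥ
          (P j).mulVec ((NormedSpace.exp (t • A j)).mulVec ξ)
        ≤ Real.exp (-lam j * t) * (ξ ⬝ᵥ (P j).mulVec ξ))
    (μ : Fin k → ℝ) (hμ1 : ∀ j, 1 ≤ μ j)
    (hμ : ∀ j : Fin k, ∀ ξ : Fin d → ℝ,
      ξ ⬝ᵥ (P j.succ).mulVec ξ ≤ μ j * (ξ ⬝ᵥ (P j.castSucc).mulVec ξ))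
    (t : Fin (k + 1) → ℝ) (ht : ∀ j, 0 ≤ t j)
    (x : ℕ → Fin d → ℝ)
    (hx : ∀ j : Fin (k + 1), x (j + 1) = (NormedSpace.exp (t j • A j)).mulVec (x j)) :
    x (k + 1) ⬝ᵥ (P (Fin.last k)).mulVec (x (k + 1)) ≤
      Real.exp (-(∑ j, lam j * t j)) * (∏ j, μ j) * (x 0 ⬝ᵥ (P 0).mulVec (x 0)) := by
  exact aux9 d k A P lam hP hdecay μ hμ1 hμ t ht x hx
end

section
/- Let Λ be a nonempty finite type of modes. For each p ∈ Λ let A_p ∈ ℝ^{d×d}, let P_p ∈ ℝ^{d×d} be symmetric positive definite, and let λ_p ∈ ℝ be such that for all t ≥ 0 and all ξ ∈ ℝ^d, (exp(t·A_p)·ξ)ᵀ P_p (exp(t·A_p)·ξ) ≤ exp(−λ_p·t)·ξᵀP_pξ. For each pair p, q ∈ Λ let μ_{pq} ≥ 1 satisfy ξᵀP_qξ ≤ μ_{pq}·ξᵀP_pξ for all ξ ∈ ℝ^d. Let n ≥ 1, let v : Fin n → Λ be a cycle of modes, and let T_0, …, T_{n−1} > 0 be dwell times satisfying the T-contractivity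 condition ∑_{j=0}^{n−1} (−λ_{v_j}·T_j) + ∑_{j=0}^{n−1} ln μ_{v_j v_{(j+1) mod n}} < 0. Set ρ := exp(∑_{j=0}^{n−1} (−λ_{v_j}·T_j) + ∑_{j=0}^{n−1} ln μ_{v_j v_{(j+1) mod n}}) and M := exp(T_{n−1}·A_{v_{n−1}}) · ⋯ · exp(T_0·A_{v_0}). Then ρ < 1 and for every x ∈ ℝ^d and every m ∈ ℕ, (M^m x)ᵀ P_{v_0} (M^m x) ≤ ρ^m · xᵀ P_{v_0} x. -/
open Matrix

open Fin.NatCast in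
theorem stmt_11 {d n : ℕ} [NeZero n] {Λ : Type} [Fintype Λ] [Nonempty Λ]
    (A : Λ → Matrix (Fin d) (Fin d) ℝ)
    (P : Λ → Matrix (Fin d) (Fin d) ℝ)
    (lam : Λ → ℝ)
    (hP : ∀ p, (P p).PosDef)
    (hdecay : ∀ p, ∀ t : ℝ, 0 ≤ t → ∀ ξ : Fin d → ℝ,
      (NormedSpace.exp (t • A p)).mulVec ξ ⬝ᵥ
          (P p).mulVec ((NormedSpace.exp (t • A p)).mulVec ξ)
        ≤ Real.exp (-lam p * t) * (ξ ⬝ᵥ (P p).mulVec ξ))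
    (μ : Λ → Λ → ℝ) (hμ1 : ∀ p q, 1 ≤ μ p q)
    (hμ : ∀ p q, ∀ ξ : Fin d → ℝ, ξ ⬝ᵥ (P q).mulVec ξ ≤ μ p q * (ξ ⬝ᵥ (P p).mulVec ξ))
    (v : Fin n → Λ) (T : Fin n → ℝ) (hT : ∀ j, 0 < T j)
    (hcontract : ∑ j, (-lam (v j) * T j) + ∑ j, Real.log (μ (v j) (v (j + 1))) < 0) :
    Real.exp (∑ j, (-lam (v j) * T j) + ∑ j, Real.log (μ (v j) (v (j + 1)))) < 1 ∧
    ∀ (x : Fin d → ℝ) (m : ℕ),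
      ((List.ofFn fun j : Fin n => NormedSpace.exp (T j • A (v j))).reverse.prod ^ m).mulVec x
          ⬝ᵥ (P (v 0)).mulVec
            (((List.ofFn fun j : Fin n =>
                NormedSpace.exp (T j • A (v j))).reverse.prod ^ m).mulVec x)
        ≤ Real.exp (∑ j, (-lam (v j) * T j) + ∑ j, Real.log (μ (v j) (v (j + 1)))) ^ m *
            (x ⬝ᵥ (P (v 0)).mulVec x) := by
  have hμpos : ∀ p q, (0 : ℝ) < μ p q := fun p q => lt_of_lt_of_le one_pos (hμ1 p q)
  set f : Fin n → Matrix (Fin d) (Fin d) ℝ := fun j => NormedSpace.exp (T j • A (v j)) with hf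
  set ρ : ℝ := Real.exp (∑ j, (-lam (v j) * T j) + ∑ j, Real.log (μ (v j) (v (j + 1)))) with hρ
  -- factorization of ρ as a product over range n
  set c : ℕ → ℝ := fun j => Real.exp (-lam (v j) * T j) * μ (v j) (v ((j : Fin n) + 1)) with hc
  have hcpos : ∀ j, 0 < c j := fun j =>
    mul_pos (Real.exp_pos _) (hμpos _ _)
  have hρprod : ρ = ∏ j ∈ Finset.range n, c j := by
    have h1 := Fin.sum_univ_eq_sum_range (fun j : ℕ => -lam (v (j : Fin n)) * T (j : Fin n)) n
    have h2 := Fin.sum_univ_eq_sum_range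
      (fun j : ℕ => Real.log (μ (v (j : Fin n)) (v ((j : Fin n) + 1)))) n
    simp only [Fin.cast_val_eq_self] at h1 h2
    rw [hρ, h1, h2, ← Finset.sum_add_distrib, Real.exp_sum]
    apply Finset.prod_congr rfl
    intro i _
    rw [Real.exp_add, Real.exp_log (hμpos _ _), hc]
  have hnonneg : ∀ p (ξ : Fin d → ℝ), 0 ≤ ξ ⬝ᵥ (P p).mulVec ξ := by
    intro p ξ
    have := (hP p).posSemidef.dotProduct_mulVec_nonneg ξ
    simpa using this
  -- one step bound along the cycle
  have step : ∀ k : ℕ, k ≤ n → ∀ x : Fin d → ℝ,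
      (((List.ofFn f).take k).reverse.prod).mulVec x ⬝ᵥ
        (P (v (k : Fin n))).mulVec ((((List.ofFn f).take k).reverse.prod).mulVec x)
      ≤ (∏ j ∈ Finset.range k, c j) * (x ⬝ᵥ (P (v 0)).mulVec x) := by
    intro k
    induction k with
    | zero => intro _ x; simp
    | succ k ih =>
      intro hkn x
      have hk : k < n := hkn
      have htake : (List.ofFn f).take (k + 1) = (List.ofFn f).take k ++ [f ⟨k, hk⟩] := by
        rw [List.take_succ]
        congr 1
        simp [List.getElem?_ofFn, hk]
      have hkcast : ((k : ℕ) : Fin n) = ⟨k, hk⟩ := by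
        simp [Fin.ext_iff, Nat.mod_eq_of_lt hk]
      have hk1cast : (((k + 1 : ℕ)) : Fin n) = (⟨k, hk⟩ : Fin n) + 1 := by
        push_cast
        rw [hkcast]
      rw [htake, List.reverse_append, List.reverse_singleton, List.singleton_append,
        List.prod_cons, ← Matrix.mulVec_mulVec]
      set y := (((List.ofFn f).take k).reverse.prod).mulVec x with hy
      set z := (f ⟨k, hk⟩).mulVec y with hz
      have h1 : z ⬝ᵥ (P (v ((k + 1 : ℕ) : Fin n))).mulVec z
          ≤ μ (v ⟨k, hk⟩) (v ((⟨k, hk⟩ : Fin n) + 1)) * (z ⬝ᵥ (P (v ⟨k, hk⟩)).mulVec z) := by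
        rw [hk1cast]
        exact hμ _ _ z
      have h2 : z ⬝ᵥ (P (v ⟨k, hk⟩)).mulVec z
          ≤ Real.exp (-lam (v ⟨k, hk⟩) * T ⟨k, hk⟩) * (y ⬝ᵥ (P (v ⟨k, hk⟩)).mulVec y) := by
        rw [hz, hf]
        exact hdecay (v ⟨k, hk⟩) (T ⟨k, hk⟩) (le_of_lt (hT _)) y
      have h3 : y ⬝ᵥ (P (v ((k : ℕ) : Fin n))).mulVec y
          ≤ (∏ j ∈ Finset.range k, c j) * (x ⬝ᵥ (P (v 0)).mulVec x) :=
        ih (le_of_lt hk) x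
      rw [hkcast] at h3
      have hck : c k = Real.exp (-lam (v ⟨k, hk⟩) * T ⟨k, hk⟩) *
          μ (v ⟨k, hk⟩) (v ((⟨k, hk⟩ : Fin n) + 1)) := by
        rw [hc]; simp only [hkcast]
      calc z ⬝ᵥ (P (v ((k + 1 : ℕ) : Fin n))).mulVec z
          ≤ μ (v ⟨k, hk⟩) (v ((⟨k, hk⟩ : Fin n) + 1)) * (z ⬝ᵥ (P (v ⟨k, hk⟩)).mulVec z) := h1
        _ ≤ μ (v ⟨k, hk⟩) (v ((⟨k, hk⟩ : Fin n) + 1)) *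
            (Real.exp (-lam (v ⟨k, hk⟩) * T ⟨k, hk⟩) * (y ⬝ᵥ (P (v ⟨k, hk⟩)).mulVec y)) :=
            mul_le_mul_of_nonneg_left h2 (le_of_lt (hμpos _ _))
        _ ≤ μ (v ⟨k, hk⟩) (v ((⟨k, hk⟩ : Fin n) + 1)) *
            (Real.exp (-lam (v ⟨k, hk⟩) * T ⟨k, hk⟩) *
              ((∏ j ∈ Finset.range k, c j) * (x ⬝ᵥ (P (v 0)).mulVec x))) := by
            apply mul_le_mul_of_nonneg_left _ (le_of_lt (hμpos _ _))
            exact mul_le_mul_of_nonneg_left h3 (le_of_lt (Real.exp_pos _))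
        _ = (∏ j ∈ Finset.range (k + 1), c j) * (x ⬝ᵥ (P (v 0)).mulVec x) := by
            rw [Finset.prod_range_succ, hck]; ring
  -- the full cycle bound
  have key : ∀ x : Fin d → ℝ,
      ((List.ofFn f).reverse.prod).mulVec x ⬝ᵥ
        (P (v 0)).mulVec (((List.ofFn f).reverse.prod).mulVec x)
      ≤ ρ * (x ⬝ᵥ (P (v 0)).mulVec x) := by
    intro x
    have := step n (le_refl n) x
    rw [List.take_of_length_le (by simp)] at this
    simpa [Fin.natCast_self, ← hρprod] using this
  have hρpos : 0 < ρ := Real.exp_pos _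
  refine ⟨Real.exp_lt_one_iff.mpr hcontract, ?_⟩
  intro x m
  induction m with
  | zero => simp
  | succ m ih =>
    rw [pow_succ', ← Matrix.mulVec_mulVec]
    calc ((List.ofFn f).reverse.prod).mulVec
          (((List.ofFn f).reverse.prod ^ m).mulVec x) ⬝ᵥ (P (v 0)).mulVec
          (((List.ofFn f).reverse.prod).mulVec (((List.ofFn f).reverse.prod ^ m).mulVec x))
        ≤ ρ * (((List.ofFn f).reverse.prod ^ m).mulVec x ⬝ᵥ
            (P (v 0)).mulVec (((List.ofFn f).reverse.prod ^ m).mulVec x)) := key _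
      _ ≤ ρ * (ρ ^ m * (x ⬝ᵥ (P (v 0)).mulVec x)) :=
          mul_le_mul_of_nonneg_left ih (le_of_lt hρpos)
      _ = ρ ^ (m + 1) * (x ⬝ᵥ (P (v 0)).mulVec x) := by ring
end

section
/- Let Λ be a nonempty finite type of modes. For each p ∈ Λ let A_p ∈ ℝ^{d×d}, let P_p ∈ ℝ^{d×d} be symmetric positive definite, and let λ_p ∈ ℝ be such that for all t ≥ 0 and all ξ ∈ ℝ^d, (exp(t·A_p)·ξ)ᵀ P_p (exp(t·A_p)·ξ) ≤ exp(−λ_p·t)·ξᵀP_pξ. For each pair p, q ∈ Λ let μ_{pq} ≥ 1 satisfy ξᵀP_qξ ≤ μ_{pq}·ξᵀP_pξ for all ξ ∈ ℝ^d. Let n ≥ 1, let v : Fin n → Λ, and let T_0, …, T_{n−1} > 0 satisfy the T-contractivity condition ∑_{j=0}^{n−1} (−λ_{v_j}·T_j) + ∑_{j=0}^{n−1} ln μ_{v_j v_{(j+1) mod n}} < 0. Define the switching times τ_0 := 0 and τ_{k+1} := τ_k + T_{k mod n} for k ∈ ℕ, and for an initial condition x_0 ∈ ℝ^d define the periodic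 switched trajectory x : [0, ∞) → ℝ^d by x(0) := x_0 and x(t) := exp((t − τ_k)·A_{v_{k mod n}})·x(τ_k) whenever τ_k ≤ t ≤ τ_{k+1}. Then x(t) → 0 as t → +∞. -/
open Matrix
open Fin.NatCast

lemma posdef_lower {d : ℕ} {P : Matrix (Fin d) (Fin d) ℝ} (hP : P.PosDef) :
    ∃ m > 0, ∀ ξ : Fin d → ℝ, m * ‖ξ‖^2 ≤ ξ ⬝ᵥ P.mulVec ξ := by
  rcases Nat.eq_zero_or_pos d with hd | hd
  · subst hd
    refine ⟨1, one_pos, fun ξ => ?_⟩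
    have hξ : ξ = 0 := Subsingleton.elim _ _
    rw [hξ, norm_zero]
    simp
  · have : Nonempty (Fin d) := ⟨⟨0, hd⟩⟩
    have hcont : Continuous fun ξ : Fin d → ℝ => ξ ⬝ᵥ P.mulVec ξ :=
      continuous_id.dotProduct (continuous_const.matrix_mulVec continuous_id)
    obtain ⟨ξ₀, hξ₀, hmin⟩ := (isCompact_sphere (0 : Fin d → ℝ) 1).exists_isMinOn
      (NormedSpace.sphere_nonempty.mpr zero_le_one) hcont.continuousOn
    have hξ₀norm : ‖ξ₀‖ = 1 := by simpa using mem_sphere_iff_norm.mp hξ₀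
    have hξ₀ne : ξ₀ ≠ 0 := by intro h; rw [h] at hξ₀norm; simp at hξ₀norm
    have hm : 0 < ξ₀ ⬝ᵥ P.mulVec ξ₀ := by simpa using hP.dotProduct_mulVec_pos hξ₀ne
    refine ⟨_, hm, fun ξ => ?_⟩
    rcases eq_or_ne ξ 0 with rfl | hne
    · simp
    · have hn : (0:ℝ) < ‖ξ‖ := norm_pos_iff.mpr hne
      set η := ‖ξ‖⁻¹ • ξ with hη
      have hηs : η ∈ Metric.sphere (0 : Fin d → ℝ) 1 := by
        simp [hη, norm_smul, abs_of_pos (inv_pos.mpr hn), inv_mul_cancel₀ hn.ne']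
      have h1 : ξ₀ ⬝ᵥ P.mulVec ξ₀ ≤ η ⬝ᵥ P.mulVec η := hmin hηs
      have h2 : η ⬝ᵥ P.mulVec η = ‖ξ‖⁻¹ ^ 2 * (ξ ⬝ᵥ P.mulVec ξ) := by
        simp only [hη, Matrix.mulVec_smul, dotProduct_smul, smul_dotProduct, smul_eq_mul]
        ring
      rw [h2] at h1
      calc (ξ₀ ⬝ᵥ P.mulVec ξ₀) * ‖ξ‖^2
          ≤ (‖ξ‖⁻¹ ^ 2 * (ξ ⬝ᵥ P.mulVec ξ)) * ‖ξ‖^2 := by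
            exact mul_le_mul_of_nonneg_right h1 (by positivity)
        _ = ξ ⬝ᵥ P.mulVec ξ := by field_simp

theorem stmt_12 {d n : ℕ} [NeZero n] {Λ : Type} [Fintype Λ] [Nonempty Λ]
    (A : Λ → Matrix (Fin d) (Fin d) ℝ)
    (P : Λ → Matrix (Fin d) (Fin d) ℝ)
    (lam : Λ → ℝ)
    (hP : ∀ p, (P p).PosDef)
    (hdecay : ∀ p, ∀ t : ℝ, 0 ≤ t → ∀ ξ : Fin d → ℝ,
      (NormedSpace.exp (t • A p)).mulVec ξ ⬝ᵥ
          (P p).mulVec ((NormedSpace.exp (t • A p)).mulVec ξ)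
        ≤ Real.exp (-lam p * t) * (ξ ⬝ᵥ (P p).mulVec ξ))
    (μ : Λ → Λ → ℝ) (hμ1 : ∀ p q, 1 ≤ μ p q)
    (hμ : ∀ p q, ∀ ξ : Fin d → ℝ, ξ ⬝ᵥ (P q).mulVec ξ ≤ μ p q * (ξ ⬝ᵥ (P p).mulVec ξ))
    (v : Fin n → Λ) (T : Fin n → ℝ) (hT : ∀ j, 0 < T j)
    (hcontract : ∑ j, (-lam (v j) * T j) + ∑ j, Real.log (μ (v j) (v (j + 1))) < 0)
    (τ : ℕ → ℝ) (hτ0 : τ 0 = 0) (hτ : ∀ k : ℕ, τ (k + 1) = τ k + T (k : Fin n))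
    (x0 : Fin d → ℝ) (x : ℝ → Fin d → ℝ) (hx0 : x 0 = x0)
    (hx : ∀ k : ℕ, ∀ t : ℝ, τ k ≤ t → t ≤ τ (k + 1) →
      x t = (NormedSpace.exp ((t - τ k) • A (v (k : Fin n)))).mulVec (x (τ k))) :
    Filter.Tendsto x Filter.atTop (nhds 0) := by
  classical
  have hn : 0 < n := Nat.pos_of_ne_zero (NeZero.ne n)
  have hFin : Nonempty (Fin n) := ⟨⟨0, hn⟩⟩
  -- τ is strictly monotone and nonnegative
  have hτmono : StrictMono τ := strictMono_nat_of_lt_succ fun k => by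
    rw [hτ k]; linarith [hT (k : Fin n)]
  have hτnn : ∀ k, 0 ≤ τ k := fun k => hτ0 ▸ hτmono.monotone (Nat.zero_le k)
  -- Lyapunov sequence
  set W : ℕ → ℝ := fun k => x (τ k) ⬝ᵥ (P (v (k : Fin n))).mulVec (x (τ k)) with hWdef
  have hWnn : ∀ k, 0 ≤ W k := fun k => by
    simpa using (hP (v (k : Fin n))).posSemidef.dotProduct_mulVec_nonneg (x (τ k))
  set r : ℕ → ℝ := fun k =>
    μ (v (k : Fin n)) (v ((k + 1 : ℕ) : Fin n)) *
      Real.exp (-lam (v (k : Fin n)) * T (k : Fin n)) with hrdef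
  have hμpos : ∀ p q, (0:ℝ) < μ p q := fun p q => lt_of_lt_of_le one_pos (hμ1 p q)
  have hrpos : ∀ k, 0 < r k := fun k => mul_pos (hμpos _ _) (Real.exp_pos _)
  -- flow across one switching interval
  have hxstep : ∀ k : ℕ,
      x (τ (k + 1)) =
        (NormedSpace.exp (T (k : Fin n) • A (v (k : Fin n)))).mulVec (x (τ k)) := by
    intro k
    have h1 : τ k ≤ τ (k + 1) := (hτmono (Nat.lt_succ_self k)).le
    have h2 := hx k (τ (k + 1)) h1 le_rfl
    rw [h2, hτ k, add_sub_cancel_left]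
  have hWstep : ∀ k, W (k + 1) ≤ r k * W k := by
    intro k
    have h1 := hμ (v (k : Fin n)) (v ((k + 1 : ℕ) : Fin n)) (x (τ (k + 1)))
    have h2 := hdecay (v (k : Fin n)) (T (k : Fin n)) (hT _).le (x (τ k))
    rw [← hxstep k] at h2
    calc W (k + 1)
        ≤ μ (v (k : Fin n)) (v ((k + 1 : ℕ) : Fin n)) *
            (x (τ (k + 1)) ⬝ᵥ (P (v (k : Fin n))).mulVec (x (τ (k + 1)))) := h1
      _ ≤ μ (v (k : Fin n)) (v ((k + 1 : ℕ) : Fin n)) *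
            (Real.exp (-lam (v (k : Fin n)) * T (k : Fin n)) * W k) :=
          mul_le_mul_of_nonneg_left h2 (hμpos _ _).le
      _ = r k * W k := by rw [hrdef]; ring
  have hWprod : ∀ k, W k ≤ (∏ i ∈ Finset.range k, r i) * W 0 := by
    intro k
    induction k with
    | zero => simp
    | succ k ih =>
      calc W (k + 1) ≤ r k * W k := hWstep k
        _ ≤ r k * ((∏ i ∈ Finset.range k, r i) * W 0) :=
            mul_le_mul_of_nonneg_left ih (hrpos k).le
        _ = (∏ i ∈ Finset.range (k + 1), r i) * W 0 := by
            rw [Finset.prod_range_succ]; ring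
  -- periodicity of r
  have hcast : ∀ m i : ℕ, ((m * n + i : ℕ) : Fin n) = ((i : ℕ) : Fin n) := by
    intro m i; push_cast; simp [Fin.natCast_self]
  have hrper : ∀ m i : ℕ, r (m * n + i) = r i := by
    intro m i
    simp only [hrdef]
    rw [hcast m i, show m * n + i + 1 = m * n + (i + 1) by ring, hcast m (i + 1)]
  -- the contraction factor over one period
  set c : ℝ := ∏ i ∈ Finset.range n, r i with hcdef
  have hcpos : 0 < c := Finset.prod_pos fun i _ => hrpos i
  have hclt : c < 1 := by
    have h1 : c = Real.exp (∑ i ∈ Finset.range n,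
        (Real.log (μ (v (i : Fin n)) (v ((i + 1 : ℕ) : Fin n)))
          + -lam (v (i : Fin n)) * T (i : Fin n))) := by
      rw [Real.exp_sum]
      refine Finset.prod_congr rfl fun i _ => ?_
      rw [hrdef]
      rw [Real.exp_add, Real.exp_log (hμpos _ _)]
    have h2 : ∑ i ∈ Finset.range n,
        (Real.log (μ (v (i : Fin n)) (v ((i + 1 : ℕ) : Fin n)))
          + -lam (v (i : Fin n)) * T (i : Fin n))
        = ∑ j, (-lam (v j) * T j) + ∑ j, Real.log (μ (v j) (v (j + 1))) := by
      rw [Finset.sum_add_distrib, add_comm]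
      congr 1
      · rw [← Fin.sum_univ_eq_sum_range (fun i =>
          -lam (v (i : Fin n)) * T ((i : ℕ) : Fin n)) n]
        exact Finset.sum_congr rfl fun j _ => by simp [Fin.cast_val_eq_self]
      · rw [← Fin.sum_univ_eq_sum_range (fun i =>
          Real.log (μ (v (i : Fin n)) (v ((i + 1 : ℕ) : Fin n)))) n]
        refine Finset.sum_congr rfl fun j _ => ?_
        have hj1 : ((j : ℕ) : Fin n) = j := Fin.cast_val_eq_self j
        have hj2 : (((j : ℕ) + 1 : ℕ) : Fin n) = j + 1 := by
          push_cast [Fin.cast_val_eq_self]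
          rfl
        rw [hj1, hj2]
    rw [h1, h2]
    exact Real.exp_lt_one_iff.mpr hcontract
  -- product over m periods
  have hprodc : ∀ m : ℕ, ∏ i ∈ Finset.range (m * n), r i = c ^ m := by
    intro m
    induction m with
    | zero => simp
    | succ m ih =>
      rw [show (m + 1) * n = m * n + n by ring, Finset.prod_range_add, ih]
      have h3 : ∏ i ∈ Finset.range n, r (m * n + i) = c := by
        rw [hcdef]
        exact Finset.prod_congr rfl fun i _ => hrper m i
      rw [h3]; ring
  set R : ℝ := ∏ i ∈ Finset.range n, max 1 (r i) with hRdef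
  have hWbound : ∀ k, W k ≤ c ^ (k / n) * R * W 0 := by
    intro k
    have hpartial : ∏ i ∈ Finset.range (k % n), r i ≤ R := by
      calc ∏ i ∈ Finset.range (k % n), r i
          ≤ ∏ i ∈ Finset.range (k % n), max 1 (r i) :=
            Finset.prod_le_prod (fun i _ => (hrpos i).le) fun i _ => le_max_right _ _
        _ ≤ R := by
            have hsplit : R = (∏ i ∈ Finset.range (k % n), max 1 (r i)) *
                ∏ i ∈ Finset.range (n - k % n), max 1 (r (k % n + i)) := by
              have hmodlt : k % n < n := Nat.mod_lt k hn
              have hnsplit : n = k % n + (n - k % n) := by omega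
              rw [hRdef]
              conv_lhs => rw [hnsplit]
              rw [Finset.prod_range_add]
            have h8 : ∏ _i ∈ Finset.range (n - k % n), (1:ℝ)
                ≤ ∏ i ∈ Finset.range (n - k % n), max 1 (r (k % n + i)) :=
              Finset.prod_le_prod (fun i _ => zero_le_one) fun i _ => le_max_left _ _
            rw [Finset.prod_const_one] at h8
            have h9 : (0:ℝ) ≤ ∏ i ∈ Finset.range (k % n), max 1 (r i) :=
              Finset.prod_nonneg fun i _ => le_trans zero_le_one (le_max_left _ _)
            calc ∏ i ∈ Finset.range (k % n), max 1 (r i)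
                = (∏ i ∈ Finset.range (k % n), max 1 (r i)) * 1 := (mul_one _).symm
              _ ≤ (∏ i ∈ Finset.range (k % n), max 1 (r i)) *
                  ∏ i ∈ Finset.range (n - k % n), max 1 (r (k % n + i)) :=
                mul_le_mul_of_nonneg_left h8 h9
              _ = R := hsplit.symm
    calc W k ≤ (∏ i ∈ Finset.range k, r i) * W 0 := hWprod k
      _ = (c ^ (k / n) * ∏ i ∈ Finset.range (k % n), r i) * W 0 := by
          conv_lhs => rw [show k = (k / n) * n + k % n by
            rw [mul_comm]; exact (Nat.div_add_mod k n).symm]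
          rw [Finset.prod_range_add, hprodc]
          have h7 : ∏ i ∈ Finset.range (k % n), r (k / n * n + i)
              = ∏ i ∈ Finset.range (k % n), r i :=
            Finset.prod_congr rfl fun i _ => hrper (k / n) i
          rw [h7]
      _ ≤ (c ^ (k / n) * R) * W 0 := by
          refine mul_le_mul_of_nonneg_right ?_ (hWnn 0)
          exact mul_le_mul_of_nonneg_left hpartial (pow_nonneg hcpos.le _)
  -- uniform bound within an interval
  set L : ℝ := Finset.univ.sup' Finset.univ_nonempty fun p : Λ => |lam p| with hLdef
  set Tm : ℝ := Finset.univ.sup' Finset.univ_nonempty T with hTmdef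
  set B : ℝ := Real.exp (L * Tm) with hBdef
  have hBpos : 0 < B := Real.exp_pos _
  have hint : ∀ k : ℕ, ∀ t : ℝ, τ k ≤ t → t ≤ τ (k + 1) →
      x t ⬝ᵥ (P (v (k : Fin n))).mulVec (x t) ≤ B * W k := by
    intro k t h1 h2
    have hs : 0 ≤ t - τ k := sub_nonneg.mpr h1
    have h3 := hdecay (v (k : Fin n)) (t - τ k) hs (x (τ k))
    rw [← hx k t h1 h2] at h3
    have hTmle : T (k : Fin n) ≤ Tm := Finset.le_sup' _ (Finset.mem_univ _)
    have hsle : t - τ k ≤ Tm := by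
      have h4 := hτ k; linarith
    have hL : |lam (v (k : Fin n))| ≤ L :=
      Finset.le_sup' (s := (Finset.univ : Finset Λ)) (fun p => |lam p|)
        (Finset.mem_univ (v (k : Fin n)))
    have hLnn : 0 ≤ L := le_trans (abs_nonneg _) hL
    have hexp : Real.exp (-lam (v (k : Fin n)) * (t - τ k)) ≤ B := by
      rw [hBdef]
      apply Real.exp_le_exp.mpr
      calc -lam (v (k : Fin n)) * (t - τ k)
          ≤ |lam (v (k : Fin n))| * (t - τ k) :=
            mul_le_mul_of_nonneg_right (neg_le_abs _) hs
        _ ≤ L * Tm := mul_le_mul hL hsle hs hLnn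
    calc x t ⬝ᵥ (P (v (k : Fin n))).mulVec (x t)
        ≤ Real.exp (-lam (v (k : Fin n)) * (t - τ k)) * W k := h3
      _ ≤ B * W k := mul_le_mul_of_nonneg_right hexp (hWnn k)
  -- lower bound on τ
  set Tmin : ℝ := Finset.univ.inf' Finset.univ_nonempty T with hTmindef
  have hTminpos : 0 < Tmin := by
    rw [hTmindef, Finset.lt_inf'_iff]
    exact fun j _ => hT j
  have hτlb : ∀ k : ℕ, (k : ℝ) * Tmin ≤ τ k := by
    intro k
    induction k with
    | zero => simp [hτ0]
    | succ k ih =>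
      have h4 : Tmin ≤ T (k : Fin n) := Finset.inf'_le _ (Finset.mem_univ _)
      rw [hτ k]
      push_cast
      linarith
  -- lower bound for all the quadratic forms
  choose mP hmPpos hmP using fun p => posdef_lower (hP p)
  set mmin : ℝ := Finset.univ.inf' Finset.univ_nonempty mP with hmmindef
  have hmminpos : 0 < mmin := by
    rw [hmmindef, Finset.lt_inf'_iff]
    exact fun p _ => hmPpos p
  have hmmin : ∀ p, ∀ ξ : Fin d → ℝ, mmin * ‖ξ‖^2 ≤ ξ ⬝ᵥ (P p).mulVec ξ := by
    intro p ξ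
    refine le_trans ?_ (hmP p ξ)
    exact mul_le_mul_of_nonneg_right (Finset.inf'_le _ (Finset.mem_univ _)) (by positivity)
  -- final ε-argument
  rw [Metric.tendsto_atTop]
  intro ε hε
  set D : ℝ := B * R * W 0 with hDdef
  have hDnn : 0 ≤ D := by
    have := hWnn 0
    rw [hDdef]; positivity
  have hδpos : 0 < mmin * ε ^ 2 / (D + 1) := by positivity
  obtain ⟨M, hM⟩ := ((tendsto_pow_atTop_nhds_zero_of_lt_one hcpos.le hclt).eventually
    (gt_mem_nhds hδpos)).exists
  refine ⟨τ (M * n), fun t ht => ?_⟩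
  -- locate t in a switching interval
  have hex : ∃ j, t < τ (j + 1) := by
    obtain ⟨j, hj⟩ := exists_nat_gt (t / Tmin)
    refine ⟨j, ?_⟩
    have h5 : t < (j : ℝ) * Tmin := by
      rw [div_lt_iff₀ hTminpos] at hj; linarith
    calc t < (j : ℝ) * Tmin := h5
      _ ≤ τ j := hτlb j
      _ ≤ τ (j + 1) := (hτmono (Nat.lt_succ_self j)).le
  set k := Nat.find hex with hkdef
  have hk2 : t < τ (k + 1) := Nat.find_spec hex
  have hk1 : τ k ≤ t := by
    rcases Nat.eq_zero_or_pos k with h0 | h0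
    · rw [h0, hτ0]; exact le_trans (hτnn (M * n)) ht
    · have h5 := Nat.find_min hex (m := k - 1) (by rw [← hkdef]; omega)
      have h6 : k - 1 + 1 = k := by omega
      rw [h6] at h5
      exact not_lt.mp h5
  have hkge : M * n ≤ k := by
    by_contra h
    push_neg at h
    have h6 : τ (k + 1) ≤ τ (M * n) := hτmono.monotone h
    linarith
  have hMdiv : M ≤ k / n := (Nat.le_div_iff_mul_le hn).mpr hkge
  have hcM : c ^ (k / n) ≤ c ^ M := pow_le_pow_of_le_one hcpos.le hclt.le hMdiv
  -- assemble the bound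
  have hchain : mmin * ‖x t‖ ^ 2 < mmin * ε ^ 2 := by
    have e1 : mmin * ‖x t‖ ^ 2 ≤ x t ⬝ᵥ (P (v (k : Fin n))).mulVec (x t) := hmmin _ _
    have e2 := hint k t hk1 hk2.le
    have e3 := hWbound k
    have e4 : B * W k ≤ B * (c ^ (k / n) * R * W 0) :=
      mul_le_mul_of_nonneg_left e3 hBpos.le
    have e5 : B * (c ^ (k / n) * R * W 0) = D * c ^ (k / n) := by
      rw [hDdef]; ring
    have e6 : D * c ^ (k / n) ≤ D * c ^ M := mul_le_mul_of_nonneg_left hcM hDnn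
    have e7 : D * c ^ M ≤ (D + 1) * c ^ M :=
      mul_le_mul_of_nonneg_right (by linarith) (pow_nonneg hcpos.le _)
    have e8 : (D + 1) * c ^ M < (D + 1) * (mmin * ε ^ 2 / (D + 1)) :=
      mul_lt_mul_of_pos_left hM (by linarith)
    have e9 : (D + 1) * (mmin * ε ^ 2 / (D + 1)) = mmin * ε ^ 2 := by
      field_simp
    linarith
  have h10 : ‖x t‖ ^ 2 < ε ^ 2 := by
    have := (mul_lt_mul_iff_right₀ hmminpos).mp hchain
    exact this
  have h11 : ‖x t‖ < ε := lt_of_pow_lt_pow_left₀ 2 hε.le h10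
  simpa [dist_eq_norm] using h11
end

section
/- Let Λ be a nonempty finite type of modes. For each p ∈ Λ let A_p ∈ ℝ^{d×d}, let P_p ∈ ℝ^{d×d} be symmetric positive definite, and let λ_p ∈ ℝ be such that for all t ≥ 0 and all ξ ∈ ℝ^d, (exp(t·A_p)·ξ)ᵀ P_p (exp(t·A_p)·ξ) ≤ exp(−λ_p·t)·ξᵀP_pξ. For each pair p, q ∈ Λ let μ_{pq} ≥ 1 satisfy ξᵀP_qξ ≤ μ_{pq}·ξᵀP_pξ for all ξ ∈ ℝ^d. Let n ≥ 1, v : Fin n → Λ, and T_0, …, T_{n−1} > 0. Define τ_0 := 0, τ_{j+1} := τ_j + T_j for 0 ≤ j ≤ n−1, and for x_0 ∈ ℝ^d define x(t) := exp((t − τ_j)·A_{v_j})·x(τ_j) for τ_j ≤ t ≤ τ_{j+1} with x(0) = x_0. Then for every j ∈ {0, …, n−1} and every t ∈ [τ_j, τ_{j+1}], x(t)ᵀ P_{v_j} x(t) ≤ exp(∑_{l=0}^{n−1} |λ_{v_l}|·T_l + ∑_{l=0}^{n−1} ln μ_{v_l v_{(l+1) mod n}}) · x_0ᵀ P_{v_0}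 x_0; that is, within one period of the cycle the Lyapunov-like value of the trajectory exceeds its initial value by at most a fixed factor depending only on the λ's, μ's and dwell times. -/
open Matrix

theorem stmt_13 {d n : ℕ} [NeZero n] {Λ : Type} [Fintype Λ] [Nonempty Λ]
    (A : Λ → Matrix (Fin d) (Fin d) ℝ)
    (P : Λ → Matrix (Fin d) (Fin d) ℝ)
    (lam : Λ → ℝ)
    (hP : ∀ p, (P p).PosDef)
    (hdecay : ∀ p, ∀ t : ℝ, 0 ≤ t → ∀ ξ : Fin d → ℝ,
      (NormedSpace.exp (t • A p)).mulVec ξ ⬝ᵥ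
          (P p).mulVec ((NormedSpace.exp (t • A p)).mulVec ξ)
        ≤ Real.exp (-lam p * t) * (ξ ⬝ᵥ (P p).mulVec ξ))
    (μ : Λ → Λ → ℝ) (hμ1 : ∀ p q, 1 ≤ μ p q)
    (hμ : ∀ p q, ∀ ξ : Fin d → ℝ, ξ ⬝ᵥ (P q).mulVec ξ ≤ μ p q * (ξ ⬝ᵥ (P p).mulVec ξ))
    (v : Fin n → Λ) (T : Fin n → ℝ) (hT : ∀ j, 0 < T j)
    (τ : ℕ → ℝ) (hτ0 : τ 0 = 0) (hτ : ∀ j : Fin n, τ (j + 1) = τ j + T j)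
    (x0 : Fin d → ℝ) (x : ℝ → Fin d → ℝ) (hx0 : x 0 = x0)
    (hx : ∀ j : Fin n, ∀ t : ℝ, τ j ≤ t → t ≤ τ (j + 1) →
      x t = (NormedSpace.exp ((t - τ j) • A (v j))).mulVec (x (τ j))) :
    ∀ j : Fin n, ∀ t : ℝ, τ j ≤ t → t ≤ τ (j + 1) →
      x t ⬝ᵥ (P (v j)).mulVec (x t) ≤
        Real.exp (∑ l, |lam (v l)| * T l + ∑ l, Real.log (μ (v l) (v (l + 1)))) *
          (x0 ⬝ᵥ (P (v 0)).mulVec x0) := by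
  classical
  have hQ0 : ∀ p (ξ : Fin d → ℝ), 0 ≤ ξ ⬝ᵥ (P p).mulVec ξ := fun p ξ => by
    have := (hP p).posSemidef.dotProduct_mulVec_nonneg ξ
    simpa using this
  set g : ℕ → ℝ := fun l => if h : l < n then
      |lam (v ⟨l, h⟩)| * T ⟨l, h⟩ + Real.log (μ (v ⟨l, h⟩) (v (⟨l, h⟩ + 1))) else 0 with hg
  have hgnonneg : ∀ l, 0 ≤ g l := by
    intro l
    simp only [hg]
    split
    · exact add_nonneg (mul_nonneg (abs_nonneg _) (hT _).le) (Real.log_nonneg (hμ1 _ _))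
    · exact le_rfl
  have key : ∀ k : ℕ, ∀ hk : k < n,
      x (τ k) ⬝ᵥ (P (v ⟨k, hk⟩)).mulVec (x (τ k)) ≤
        Real.exp (∑ l ∈ Finset.range k, g l) * (x0 ⬝ᵥ (P (v 0)).mulVec x0) := by
    intro k
    induction k with
    | zero =>
      intro hk
      have h0 : (⟨0, hk⟩ : Fin n) = 0 := by ext; simp
      rw [h0, hτ0, hx0]
      simp
    | succ k ih =>
      intro hk1
      have hk : k < n := Nat.lt_of_succ_lt hk1
      set j : Fin n := ⟨k, hk⟩ with hj
      have hτs : τ (k + 1) = τ k + T j := hτ j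
      have hle : τ k ≤ τ (k + 1) := by rw [hτs]; linarith [hT j]
      have hxstep : x (τ (k + 1)) =
          (NormedSpace.exp ((τ (k + 1) - τ k) • A (v j))).mulVec (x (τ k)) :=
        hx j (τ (k + 1)) hle le_rfl
      have hTeq : τ (k + 1) - τ k = T j := by rw [hτs]; ring
      have hsucc : (⟨k + 1, hk1⟩ : Fin n) = j + 1 := by
        ext
        simp only [hj, Fin.val_add, Fin.val_one', Fin.val_mk]
        rw [Nat.mod_eq_of_lt (show 1 < n by omega), Nat.mod_eq_of_lt hk1]
      have hμpos : (0:ℝ) < μ (v j) (v (j + 1)) := lt_of_lt_of_le one_pos (hμ1 _ _)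
      have h1 : x (τ (k+1)) ⬝ᵥ (P (v (j+1))).mulVec (x (τ (k+1))) ≤
          μ (v j) (v (j+1)) * (x (τ (k+1)) ⬝ᵥ (P (v j)).mulVec (x (τ (k+1)))) := hμ _ _ _
      have h2 : x (τ (k+1)) ⬝ᵥ (P (v j)).mulVec (x (τ (k+1))) ≤
          Real.exp (-lam (v j) * T j) * (x (τ k) ⬝ᵥ (P (v j)).mulVec (x (τ k))) := by
        rw [hxstep, hTeq]
        exact hdecay (v j) (T j) (hT j).le _
      have h3 : Real.exp (-lam (v j) * T j) ≤ Real.exp (|lam (v j)| * T j) :=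
        Real.exp_le_exp.2 (mul_le_mul_of_nonneg_right (neg_le_abs _) (hT j).le)
      have h4 := ih hk
      calc x (τ (k+1)) ⬝ᵥ (P (v ⟨k+1, hk1⟩)).mulVec (x (τ (k+1)))
          = x (τ (k+1)) ⬝ᵥ (P (v (j+1))).mulVec (x (τ (k+1))) := by rw [hsucc]
        _ ≤ μ (v j) (v (j+1)) * (x (τ (k+1)) ⬝ᵥ (P (v j)).mulVec (x (τ (k+1)))) := h1
        _ ≤ μ (v j) (v (j+1)) *
            (Real.exp (-lam (v j) * T j) * (x (τ k) ⬝ᵥ (P (v j)).mulVec (x (τ k)))) :=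
            mul_le_mul_of_nonneg_left h2 hμpos.le
        _ ≤ μ (v j) (v (j+1)) *
            (Real.exp (|lam (v j)| * T j) * (x (τ k) ⬝ᵥ (P (v j)).mulVec (x (τ k)))) :=
            mul_le_mul_of_nonneg_left (mul_le_mul_of_nonneg_right h3 (hQ0 _ _)) hμpos.le
        _ ≤ μ (v j) (v (j+1)) * (Real.exp (|lam (v j)| * T j) *
              (Real.exp (∑ l ∈ Finset.range k, g l) * (x0 ⬝ᵥ (P (v 0)).mulVec x0))) :=
            mul_le_mul_of_nonneg_left
              (mul_le_mul_of_nonneg_left h4 (Real.exp_pos _).le) hμpos.le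
        _ = Real.exp (∑ l ∈ Finset.range (k+1), g l) * (x0 ⬝ᵥ (P (v 0)).mulVec x0) := by
            rw [Finset.sum_range_succ]
            have hgk : g k = |lam (v j)| * T j + Real.log (μ (v j) (v (j + 1))) := by
              simp only [hg]
              rw [dif_pos hk]
            rw [hgk, Real.exp_add, Real.exp_add, Real.exp_log hμpos]
            ring
  intro j t hjt htj
  have hk : (j : ℕ) < n := j.isLt
  have hτs : τ ((j : ℕ) + 1) = τ j + T j := hτ j
  have hxstep : x t = (NormedSpace.exp ((t - τ j) • A (v j))).mulVec (x (τ j)) :=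
    hx j t hjt htj
  have ht0 : (0:ℝ) ≤ t - τ j := by linarith
  have htT : t - τ j ≤ T j := by
    have := htj
    rw [hτs] at this
    linarith
  have h2 : x t ⬝ᵥ (P (v j)).mulVec (x t) ≤
      Real.exp (-lam (v j) * (t - τ j)) * (x (τ j) ⬝ᵥ (P (v j)).mulVec (x (τ j))) := by
    rw [hxstep]
    exact hdecay (v j) (t - τ j) ht0 _
  have h3 : Real.exp (-lam (v j) * (t - τ j)) ≤ Real.exp (|lam (v j)| * T j) := by
    apply Real.exp_le_exp.2
    calc -lam (v j) * (t - τ j) ≤ |lam (v j)| * (t - τ j) :=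
          mul_le_mul_of_nonneg_right (neg_le_abs _) ht0
      _ ≤ |lam (v j)| * T j := mul_le_mul_of_nonneg_left htT (abs_nonneg _)
  have h4 := key j hk
  rw [Fin.eta] at h4
  have hsum : ∑ l ∈ Finset.range n, g l =
      ∑ l, |lam (v l)| * T l + ∑ l, Real.log (μ (v l) (v (l + 1))) := by
    rw [← Finset.sum_add_distrib, ← Fin.sum_univ_eq_sum_range (fun l => g l) n]
    apply Finset.sum_congr rfl
    intro i _
    simp only [hg]
    rw [dif_pos i.isLt]
  have hSle : |lam (v j)| * T j + ∑ l ∈ Finset.range (j : ℕ), g l ≤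
      ∑ l ∈ Finset.range n, g l := by
    have h5 : |lam (v j)| * T j + ∑ l ∈ Finset.range (j : ℕ), g l ≤
        ∑ l ∈ Finset.range ((j : ℕ) + 1), g l := by
      rw [Finset.sum_range_succ]
      have hgj : |lam (v j)| * T j ≤ g (j : ℕ) := by
        simp only [hg]
        rw [dif_pos hk]
        have := Real.log_nonneg (hμ1 (v ⟨(j:ℕ), hk⟩) (v (⟨(j:ℕ), hk⟩ + 1)))
        simp only [Fin.eta] at this ⊢
        linarith
      linarith
    refine le_trans h5 (Finset.sum_le_sum_of_subset_of_nonneg ?_ fun i _ _ => hgnonneg i)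
    exact Finset.range_subset_range.2 hk
  calc x t ⬝ᵥ (P (v j)).mulVec (x t)
      ≤ Real.exp (-lam (v j) * (t - τ j)) * (x (τ j) ⬝ᵥ (P (v j)).mulVec (x (τ j))) := h2
    _ ≤ Real.exp (|lam (v j)| * T j) * (x (τ j) ⬝ᵥ (P (v j)).mulVec (x (τ j))) :=
        mul_le_mul_of_nonneg_right h3 (hQ0 _ _)
    _ ≤ Real.exp (|lam (v j)| * T j) *
          (Real.exp (∑ l ∈ Finset.range (j : ℕ), g l) * (x0 ⬝ᵥ (P (v 0)).mulVec x0)) :=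
        mul_le_mul_of_nonneg_left h4 (Real.exp_pos _).le
    _ = Real.exp (|lam (v j)| * T j + ∑ l ∈ Finset.range (j : ℕ), g l) *
          (x0 ⬝ᵥ (P (v 0)).mulVec x0) := by rw [Real.exp_add]; ring
    _ ≤ Real.exp (∑ l ∈ Finset.range n, g l) * (x0 ⬝ᵥ (P (v 0)).mulVec x0) :=
        mul_le_mul_of_nonneg_right (Real.exp_le_exp.2 hSle) (hQ0 _ _)
    _ = _ := by rw [hsum]
end

section
/- Let Λ be a nonempty finite type of modes. For each p ∈ Λ let A_p ∈ ℝ^{d×d}, let P_p ∈ ℝ^{d×d} be symmetric positive definite, and let λ_p ∈ ℝ be such that for all t ≥ 0 and all ξ ∈ ℝ^d, (exp(t·A_p)·ξ)ᵀ P_p (exp(t·A_p)·ξ) ≤ exp(−λ_p·t)·ξᵀP_pξ. For each pair p, q ∈ Λ let μ_{pq} ≥ 1 satisfy ξᵀP_qξ ≤ μ_{pq}·ξᵀP_pξ for all ξ ∈ ℝ^d. Let n ≥ 1, v : Fin n → Λ, and T_0, …, T_{n−1} > 0 satisfy ∑_{j=0}^{n−1} (−λ_{v_j}·T_j) + ∑_{j=0}^{n−1}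 ln μ_{v_j v_{(j+1) mod n}} < 0, and set ρ := exp of that sum, T_W := ∑_{j=0}^{n−1} T_j, K := exp(∑_{j=0}^{n−1} |λ_{v_j}|·T_j + ∑_{j=0}^{n−1} ln μ_{v_j v_{(j+1) mod n}}), and c := sqrt((max_{p∈Λ} λ_max(P_p)) / (min_{p∈Λ} λ_min(P_p))). Define τ_0 := 0, τ_{k+1} := τ_k + T_{k mod n}, and for x_0 ∈ ℝ^d the periodic switched trajectory x(t) := exp((t − τ_k)·A_{v_{k mod n}})·x(τ_k) for τ_k ≤ t ≤ τ_{k+1}, x(0) = x_0. Then for every m ∈ ℕ and every t with m·T_W ≤ t < (m+1)·T_W, ‖x(t)‖ ≤ c · sqrt(K · ρ^m) · ‖x_0‖, where ‖·‖ is the Euclidean norm. -/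
open Matrix Fin.NatCast

lemma quad_eq_aux {d : ℕ} {A : Matrix (Fin d) (Fin d) ℝ} (hA : A.IsHermitian) (ξ : Fin d → ℝ) :
    ∃ y : Fin d → ℝ, (∑ i, y i ^ 2 = ∑ i, ξ i ^ 2) ∧
      ξ ⬝ᵥ A.mulVec ξ = ∑ i, hA.eigenvalues i * y i ^ 2 := by
  set U : Matrix (Fin d) (Fin d) ℝ := (hA.eigenvectorUnitary : Matrix (Fin d) (Fin d) ℝ) with hU
  have hUmem : U ∈ Matrix.unitaryGroup (Fin d) ℝ := (hA.eigenvectorUnitary).2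
  set y : Fin d → ℝ := (star U).mulVec ξ with hy
  have hvm : ξ ᵥ* U = y := by
    rw [hy, Matrix.star_eq_conjTranspose, conjTranspose_eq_transpose_of_trivial,
      mulVec_transpose]
  refine ⟨y, ?_, ?_⟩
  · have h1 : y ⬝ᵥ y = ξ ⬝ᵥ ξ := by
      calc y ⬝ᵥ y = (ξ ᵥ* U) ⬝ᵥ y := by rw [hvm]
      _ = ξ ⬝ᵥ (U *ᵥ y) := (dotProduct_mulVec ξ U y).symm
      _ = ξ ⬝ᵥ ((U * star U) *ᵥ ξ) := by rw [hy, mulVec_mulVec]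
      _ = ξ ⬝ᵥ ξ := by rw [(Matrix.mem_unitaryGroup_iff).mp hUmem, one_mulVec]
    simpa [dotProduct, sq] using h1
  · calc ξ ⬝ᵥ A.mulVec ξ
        = ξ ⬝ᵥ ((U * (diagonal (RCLike.ofReal ∘ hA.eigenvalues) * star U)) *ᵥ ξ) := by
          rw [← mul_assoc]; exact congrArg (fun M => ξ ⬝ᵥ M *ᵥ ξ) hA.spectral_theorem
      _ = ξ ⬝ᵥ (U *ᵥ (diagonal (RCLike.ofReal ∘ hA.eigenvalues) *ᵥ y)) := by
          rw [← mulVec_mulVec, ← mulVec_mulVec, ← hy]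
      _ = (ξ ᵥ* U) ⬝ᵥ (diagonal (RCLike.ofReal ∘ hA.eigenvalues) *ᵥ y) := by
          rw [dotProduct_mulVec]
      _ = ∑ i, hA.eigenvalues i * y i ^ 2 := by
          rw [hvm]
          simp only [dotProduct, mulVec_diagonal, Function.comp_apply, RCLike.ofReal_real_eq_id,
            id_eq]
          exact Finset.sum_congr rfl fun i _ => by ring

lemma quad_lb_aux {d : ℕ} {A : Matrix (Fin d) (Fin d) ℝ} (hA : A.IsHermitian) (ξ : Fin d → ℝ)
    {c : ℝ} (hc : ∀ i, c ≤ hA.eigenvalues i) :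
    c * ∑ i, ξ i ^ 2 ≤ ξ ⬝ᵥ A.mulVec ξ := by
  obtain ⟨y, hnorm, hval⟩ := quad_eq_aux hA ξ
  rw [hval, ← hnorm, Finset.mul_sum]
  exact Finset.sum_le_sum fun i _ => mul_le_mul_of_nonneg_right (hc i) (sq_nonneg _)

lemma quad_ub_aux {d : ℕ} {A : Matrix (Fin d) (Fin d) ℝ} (hA : A.IsHermitian) (ξ : Fin d → ℝ)
    {C : ℝ} (hC : ∀ i, hA.eigenvalues i ≤ C) :
    ξ ⬝ᵥ A.mulVec ξ ≤ C * ∑ i, ξ i ^ 2 := by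
  obtain ⟨y, hnorm, hval⟩ := quad_eq_aux hA ξ
  rw [hval, ← hnorm, Finset.mul_sum]
  exact Finset.sum_le_sum fun i _ => mul_le_mul_of_nonneg_right (hC i) (sq_nonneg _)

set_option maxHeartbeats 1000000 in
theorem stmt_14 {d n : ℕ} [NeZero n] {Λ : Type} [Fintype Λ] [Nonempty Λ]
    (A : Λ → Matrix (Fin d) (Fin d) ℝ)
    (P : Λ → Matrix (Fin d) (Fin d) ℝ)
    (lam : Λ → ℝ)
    (hP : ∀ p, (P p).PosDef)
    (hdecay : ∀ p, ∀ t : ℝ, 0 ≤ t → ∀ ξ : Fin d → ℝ,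
      (NormedSpace.exp (t • A p)).mulVec ξ ⬝ᵥ
          (P p).mulVec ((NormedSpace.exp (t • A p)).mulVec ξ)
        ≤ Real.exp (-lam p * t) * (ξ ⬝ᵥ (P p).mulVec ξ))
    (μ : Λ → Λ → ℝ) (hμ1 : ∀ p q, 1 ≤ μ p q)
    (hμ : ∀ p q, ∀ ξ : Fin d → ℝ, ξ ⬝ᵥ (P q).mulVec ξ ≤ μ p q * (ξ ⬝ᵥ (P p).mulVec ξ))
    (v : Fin n → Λ) (T : Fin n → ℝ) (hT : ∀ j, 0 < T j)
    (hcontract : ∑ j, (-lam (v j) * T j) + ∑ j, Real.log (μ (v j) (v (j + 1))) < 0)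
    (τ : ℕ → ℝ) (hτ0 : τ 0 = 0) (hτ : ∀ k : ℕ, τ (k + 1) = τ k + T (k : Fin n))
    (x0 : Fin d → ℝ) (x : ℝ → Fin d → ℝ) (hx0 : x 0 = x0)
    (hx : ∀ k : ℕ, ∀ t : ℝ, τ k ≤ t → t ≤ τ (k + 1) →
      x t = (NormedSpace.exp ((t - τ k) • A (v (k : Fin n)))).mulVec (x (τ k))) :
    ∀ m : ℕ, ∀ t : ℝ, (m : ℝ) * (∑ j, T j) ≤ t → t < ((m : ℝ) + 1) * (∑ j, T j) →
      Real.sqrt (∑ i, x t i ^ 2) ≤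
        Real.sqrt ((⨆ p, ⨆ i, (hP p).1.eigenvalues i) / (⨅ p, ⨅ i, (hP p).1.eigenvalues i)) *
          Real.sqrt
            (Real.exp (∑ j, |lam (v j)| * T j + ∑ j, Real.log (μ (v j) (v (j + 1)))) *
              Real.exp (∑ j, (-lam (v j) * T j) + ∑ j, Real.log (μ (v j) (v (j + 1)))) ^ m) *
          Real.sqrt (∑ i, x0 i ^ 2) := by
  intro m t hmt htm
  have hn : 0 < n := Nat.pos_of_ne_zero (NeZero.ne n)
  -- abbreviations
  set ρ : ℝ := Real.exp (∑ j, (-lam (v j) * T j) + ∑ j, Real.log (μ (v j) (v (j + 1)))) with hρ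
  set K : ℝ := Real.exp (∑ j, |lam (v j)| * T j + ∑ j, Real.log (μ (v j) (v (j + 1)))) with hK
  set TW : ℝ := ∑ j, T j with hTW
  set e : ℝ := ⨅ p, ⨅ i, (hP p).1.eigenvalues i with he
  set E : ℝ := ⨆ p, ⨆ i, (hP p).1.eigenvalues i with hE
  rcases Nat.eq_zero_or_pos d with hd | hd
  · subst hd
    simp only [Finset.univ_eq_empty, Finset.sum_empty, Real.sqrt_zero]
    positivity
  haveI : NeZero d := ⟨hd.ne'⟩
  -- basic facts about τ
  have hτmono : ∀ k : ℕ, τ k ≤ τ (k + 1) := by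
    intro k; rw [hτ k]; linarith [hT ((k : Fin n))]
  have hτshift : ∀ k : ℕ, τ (k + n) = τ k + TW := by
    have hτn : τ n = TW := by
      have hrange : ∀ k : ℕ, τ k = ∑ i ∈ Finset.range k, T (i : Fin n) := by
        intro k
        induction k with
        | zero => simpa using hτ0
        | succ k ih => rw [hτ k, ih, Finset.sum_range_succ]
      rw [hrange n, hTW, ← Fin.sum_univ_eq_sum_range (fun i : ℕ => T (i : Fin n)) n]
      exact Finset.sum_congr rfl fun i _ => by rw [Fin.cast_val_eq_self]
    intro k
    induction k with
    | zero => simpa [hτ0] using hτn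
    | succ k ih =>
      have h1 : k + 1 + n = (k + n) + 1 := by ring
      rw [h1, hτ (k + n), hτ k, ih]
      have : ((k + n : ℕ) : Fin n) = (k : Fin n) := by
        ext; simp only [Fin.val_natCast, Nat.add_mod_right]
      rw [this]; ring
  have hτmul : ∀ m' : ℕ, τ (m' * n) = (m' : ℝ) * TW := by
    intro m'
    induction m' with
    | zero => simpa using hτ0
    | succ m' ih =>
      have : (m' + 1) * n = m' * n + n := by ring
      rw [this, hτshift, ih]; push_cast; ring
  -- locate the interval containing t
  have hfind : ∀ b a : ℕ, a < b → τ a ≤ t → t < τ b →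
      ∃ k, a ≤ k ∧ k < b ∧ τ k ≤ t ∧ t < τ (k + 1) := by
    intro b
    induction b with
    | zero => omega
    | succ b ih =>
      intro a hab hat hta
      rcases le_or_gt (τ b) t with hbt | htb
      · exact ⟨b, by omega, by omega, hbt, hta⟩
      · rcases Nat.lt_or_ge a b with h | h
        · exact (ih a h hat htb).imp fun k ⟨h1, h2, h3⟩ => ⟨h1, by omega, h3⟩
        · have : a = b := by omega
          subst this; exact absurd hat (not_le.mpr htb)
  obtain ⟨k, hk1, hk2, hkt, htk⟩ := by
    refine hfind (m * n + n) (m * n) (by omega) ?_ ?_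
    · rw [hτmul]; exact hmt
    · rw [hτshift, hτmul]; rw [hTW] at htm ⊢; nlinarith [htm]
  set j : ℕ := k - m * n with hj
  have hkj : k = m * n + j := by omega
  have hjn : j < n := by omega
  -- Lyapunov values along the switching sequence
  set V : Λ → (Fin d → ℝ) → ℝ := fun p ξ => ξ ⬝ᵥ (P p).mulVec ξ with hV
  have hVnonneg : ∀ p ξ, 0 ≤ V p ξ := by
    intro p ξ
    have := (hP p).posSemidef.dotProduct_mulVec_nonneg ξ
    simpa [hV] using this
  set Vk : ℕ → ℝ := fun k => V (v (k : Fin n)) (x (τ k)) with hVk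
  set f : ℕ → ℝ := fun i => μ (v (i : Fin n)) (v ((i + 1 : ℕ) : Fin n)) *
    Real.exp (-lam (v (i : Fin n)) * T (i : Fin n)) with hf
  have hfpos : ∀ i, 0 < f i := fun i =>
    mul_pos (lt_of_lt_of_le one_pos (hμ1 _ _)) (Real.exp_pos _)
  have hstep : ∀ k : ℕ, Vk (k + 1) ≤ f k * Vk k := by
    intro k
    have hxk : x (τ (k + 1)) =
        (NormedSpace.exp ((τ (k + 1) - τ k) • A (v (k : Fin n)))).mulVec (x (τ k)) :=
      hx k (τ (k + 1)) (hτmono k) le_rfl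
    have hTk : τ (k + 1) - τ k = T (k : Fin n) := by rw [hτ k]; ring
    have h1 : V (v (k : Fin n)) (x (τ (k + 1))) ≤
        Real.exp (-lam (v (k : Fin n)) * T (k : Fin n)) * Vk k := by
      rw [hxk, hTk]
      exact hdecay _ _ (le_of_lt (hT _)) _
    have h2 : Vk (k + 1) ≤ μ (v (k : Fin n)) (v ((k + 1 : ℕ) : Fin n)) *
        V (v (k : Fin n)) (x (τ (k + 1))) := hμ _ _ _
    calc Vk (k + 1) ≤ μ (v (k : Fin n)) (v ((k + 1 : ℕ) : Fin n)) *
        V (v (k : Fin n)) (x (τ (k + 1))) := h2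
      _ ≤ μ (v (k : Fin n)) (v ((k + 1 : ℕ) : Fin n)) *
          (Real.exp (-lam (v (k : Fin n)) * T (k : Fin n)) * Vk k) :=
        mul_le_mul_of_nonneg_left h1 (le_trans zero_le_one (hμ1 _ _))
      _ = f k * Vk k := by rw [hf]; ring
  have hchain : ∀ k : ℕ, Vk k ≤ (∏ i ∈ Finset.range k, f i) * Vk 0 := by
    intro k
    induction k with
    | zero => simp
    | succ k ih =>
      calc Vk (k + 1) ≤ f k * Vk k := hstep k
        _ ≤ f k * ((∏ i ∈ Finset.range k, f i) * Vk 0) :=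
          mul_le_mul_of_nonneg_left ih (le_of_lt (hfpos k))
        _ = (∏ i ∈ Finset.range (k + 1), f i) * Vk 0 := by
          rw [Finset.prod_range_succ]; ring
  -- products of f over a full period equal ρ
  have hμpos : ∀ i : ℕ, (0:ℝ) < μ (v (i : Fin n)) (v ((i + 1 : ℕ) : Fin n)) := fun i =>
    lt_of_lt_of_le one_pos (hμ1 _ _)
  have conv1 : ∑ i ∈ Finset.range n, (-lam (v (i : Fin n)) * T (i : Fin n)) =
      ∑ j, (-lam (v j) * T j) := by
    rw [← Fin.sum_univ_eq_sum_range (fun i : ℕ => -lam (v (i : Fin n)) * T (i : Fin n)) n]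
    exact Finset.sum_congr rfl fun i _ => by rw [Fin.cast_val_eq_self]
  have conv2 : ∑ i ∈ Finset.range n, Real.log (μ (v (i : Fin n)) (v ((i + 1 : ℕ) : Fin n))) =
      ∑ j, Real.log (μ (v j) (v (j + 1))) := by
    rw [← Fin.sum_univ_eq_sum_range
      (fun i : ℕ => Real.log (μ (v (i : Fin n)) (v ((i + 1 : ℕ) : Fin n)))) n]
    refine Finset.sum_congr rfl fun i _ => ?_
    have h1 : (((i : ℕ) + 1 : ℕ) : Fin n) = i + 1 := by
      push_cast [Fin.cast_val_eq_self]; ring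
    rw [Fin.cast_val_eq_self, h1]
  have conv3 : ∑ i ∈ Finset.range n, (|lam (v (i : Fin n))| * T (i : Fin n)) =
      ∑ j, (|lam (v j)| * T j) := by
    rw [← Fin.sum_univ_eq_sum_range (fun i : ℕ => |lam (v (i : Fin n))| * T (i : Fin n)) n]
    exact Finset.sum_congr rfl fun i _ => by rw [Fin.cast_val_eq_self]
  have hfn : ∏ i ∈ Finset.range n, f i = ρ := by
    have h1 : ∏ i ∈ Finset.range n, f i =
        (∏ i ∈ Finset.range n, μ (v (i : Fin n)) (v ((i + 1 : ℕ) : Fin n))) *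
        ∏ i ∈ Finset.range n, Real.exp (-lam (v (i : Fin n)) * T (i : Fin n)) := by
      simp only [hf]
      rw [Finset.prod_mul_distrib]
    rw [h1, hρ, ← Real.exp_sum, conv1]
    have h2 : ∏ i ∈ Finset.range n, μ (v (i : Fin n)) (v ((i + 1 : ℕ) : Fin n)) =
        Real.exp (∑ j, Real.log (μ (v j) (v (j + 1)))) := by
      rw [← conv2, Real.exp_sum]
      exact Finset.prod_congr rfl fun i _ => (Real.exp_log (hμpos i)).symm
    rw [h2, ← Real.exp_add, add_comm]
  have hshiftf : ∀ a i : ℕ, f (a * n + i) = f i := by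
    intro a i
    have h1 : ((a * n + i : ℕ) : Fin n) = (i : Fin n) := by
      ext; simp only [Fin.val_natCast]; rw [show a * n + i = i + a * n by ring, Nat.add_mul_mod_self_right]
    have h2 : ((a * n + i + 1 : ℕ) : Fin n) = ((i + 1 : ℕ) : Fin n) := by
      ext; simp only [Fin.val_natCast]; rw [show a * n + i + 1 = (i + 1) + a * n by ring, Nat.add_mul_mod_self_right]
    rw [hf]; simp only [h1, h2]
  have hCm : ∀ m' : ℕ, ∏ i ∈ Finset.range (m' * n), f i = ρ ^ m' := by
    intro m'
    induction m' with
    | zero => simp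
    | succ m' ih =>
      have h1 : (m' + 1) * n = m' * n + n := by ring
      rw [h1, Finset.prod_range_add, ih]
      have : ∏ i ∈ Finset.range n, f (m' * n + i) = ρ := by
        rw [← hfn]; exact Finset.prod_congr rfl fun i _ => hshiftf m' i
      rw [this]; ring
  have hCsplit : ∏ i ∈ Finset.range k, f i = ρ ^ m * ∏ i ∈ Finset.range j, f i := by
    rw [hkj, Finset.prod_range_add, hCm]
    congr 1
    exact Finset.prod_congr rfl fun i _ => hshiftf m i
  -- the dominating product g
  set g : ℕ → ℝ := fun i => μ (v (i : Fin n)) (v ((i + 1 : ℕ) : Fin n)) *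
    Real.exp (|lam (v (i : Fin n))| * T (i : Fin n)) with hg
  have hg1 : ∀ i, 1 ≤ g i := by
    intro i
    simp only [hg]
    have h1 : (1 : ℝ) ≤ Real.exp (|lam (v (i : Fin n))| * T (i : Fin n)) :=
      Real.one_le_exp (mul_nonneg (abs_nonneg _) (le_of_lt (hT _)))
    nlinarith [hμ1 (v (i : Fin n)) (v ((i + 1 : ℕ) : Fin n))]
  have hfg : ∀ i, f i ≤ g i := by
    intro i
    simp only [hf, hg]
    apply mul_le_mul_of_nonneg_left _ (le_trans zero_le_one (hμ1 _ _))
    apply Real.exp_le_exp.2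
    have := hT ((i : Fin n))
    nlinarith [neg_abs_le (lam (v (i : Fin n))), le_abs_self (lam (v (i : Fin n)))]
  have hgn : ∏ i ∈ Finset.range n, g i = K := by
    have h1 : ∏ i ∈ Finset.range n, g i =
        (∏ i ∈ Finset.range n, μ (v (i : Fin n)) (v ((i + 1 : ℕ) : Fin n))) *
        ∏ i ∈ Finset.range n, Real.exp (|lam (v (i : Fin n))| * T (i : Fin n)) := by
      simp only [hg]
      rw [Finset.prod_mul_distrib]
    rw [h1, hK, ← Real.exp_sum, conv3]
    have h2 : ∏ i ∈ Finset.range n, μ (v (i : Fin n)) (v ((i + 1 : ℕ) : Fin n)) =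
        Real.exp (∑ j, Real.log (μ (v j) (v (j + 1)))) := by
      rw [← conv2, Real.exp_sum]
      exact Finset.prod_congr rfl fun i _ => (Real.exp_log (hμpos i)).symm
    rw [h2, ← Real.exp_add, add_comm]
  -- bound : exp(|lam_j| T_j) * (prod_{i<j} f i) ≤ K
  have hKey : Real.exp (|lam (v (j : Fin n))| * T (j : Fin n)) * ∏ i ∈ Finset.range j, f i ≤ K := by
    have h1 : ∏ i ∈ Finset.range j, f i ≤ ∏ i ∈ Finset.range j, g i :=
      Finset.prod_le_prod (fun i _ => le_of_lt (hfpos i)) (fun i _ => hfg i)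
    have h2 : Real.exp (|lam (v (j : Fin n))| * T (j : Fin n)) * ∏ i ∈ Finset.range j, g i ≤
        ∏ i ∈ Finset.range (j + 1), g i := by
      rw [Finset.prod_range_succ, mul_comm (∏ i ∈ Finset.range j, g i) (g j)]
      have hprodpos : 0 < ∏ i ∈ Finset.range j, g i :=
        Finset.prod_pos fun i _ => lt_of_lt_of_le one_pos (hg1 i)
      apply mul_le_mul_of_nonneg_right _ (le_of_lt hprodpos)
      simp only [hg]
      nlinarith [hμ1 (v (j : Fin n)) (v ((j + 1 : ℕ) : Fin n)),
        Real.exp_pos (|lam (v (j : Fin n))| * T (j : Fin n))]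
    have hgrow : ∀ b a : ℕ, a ≤ b → ∏ i ∈ Finset.range a, g i ≤ ∏ i ∈ Finset.range b, g i := by
      intro b
      induction b with
      | zero => intro a ha; simp [Nat.le_zero.mp ha]
      | succ b ih =>
        intro a ha
        rcases Nat.lt_or_ge a (b + 1) with h | h
        · calc ∏ i ∈ Finset.range a, g i ≤ ∏ i ∈ Finset.range b, g i := ih a (by omega)
            _ ≤ ∏ i ∈ Finset.range (b + 1), g i := by
              rw [Finset.prod_range_succ]
              exact le_mul_of_one_le_right
                (le_of_lt (Finset.prod_pos fun i _ => lt_of_lt_of_le one_pos (hg1 i))) (hg1 b)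
        · have : a = b + 1 := by omega
          subst this; exact le_rfl
    have h3 : ∏ i ∈ Finset.range (j + 1), g i ≤ ∏ i ∈ Finset.range n, g i :=
      hgrow n (j + 1) (by omega)
    calc Real.exp (|lam (v (j : Fin n))| * T (j : Fin n)) * ∏ i ∈ Finset.range j, f i
        ≤ Real.exp (|lam (v (j : Fin n))| * T (j : Fin n)) * ∏ i ∈ Finset.range j, g i :=
          mul_le_mul_of_nonneg_left h1 (le_of_lt (Real.exp_pos _))
      _ ≤ ∏ i ∈ Finset.range (j + 1), g i := h2
      _ ≤ ∏ i ∈ Finset.range n, g i := h3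
      _ = K := hgn
  -- bound V at time t
  have hVt : V (v (k : Fin n)) (x t) ≤ K * ρ ^ m * Vk 0 := by
    have hxt : x t = (NormedSpace.exp ((t - τ k) • A (v (k : Fin n)))).mulVec (x (τ k)) :=
      hx k t hkt (le_of_lt htk)
    have hs0 : 0 ≤ t - τ k := by linarith
    have hsT : t - τ k ≤ T (k : Fin n) := by
      have := hτ k; linarith [htk.le, this]
    have h1 : V (v (k : Fin n)) (x t) ≤
        Real.exp (-lam (v (k : Fin n)) * (t - τ k)) * Vk k := by
      rw [hxt]; exact hdecay _ _ hs0 _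
    have h2 : Real.exp (-lam (v (k : Fin n)) * (t - τ k)) ≤
        Real.exp (|lam (v (k : Fin n))| * T (k : Fin n)) := by
      apply Real.exp_le_exp.2
      nlinarith [neg_abs_le (lam (v (k : Fin n))), le_abs_self (lam (v (k : Fin n))),
        abs_nonneg (lam (v (k : Fin n)))]
    have hkjcast : ((k : ℕ) : Fin n) = ((j : ℕ) : Fin n) := by
      rw [hkj]; ext; simp only [Fin.val_natCast]; rw [show m * n + j = j + m * n by ring, Nat.add_mul_mod_self_right]
    have hVk0 : 0 ≤ Vk 0 := hVnonneg _ _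
    have hρpos : (0:ℝ) < ρ ^ m := pow_pos (Real.exp_pos _) m
    calc V (v (k : Fin n)) (x t)
        ≤ Real.exp (-lam (v (k : Fin n)) * (t - τ k)) * Vk k := h1
      _ ≤ Real.exp (-lam (v (k : Fin n)) * (t - τ k)) *
          ((∏ i ∈ Finset.range k, f i) * Vk 0) := by
          apply mul_le_mul_of_nonneg_left (hchain k) (le_of_lt (Real.exp_pos _))
      _ ≤ Real.exp (|lam (v (k : Fin n))| * T (k : Fin n)) *
          ((∏ i ∈ Finset.range k, f i) * Vk 0) := by
          apply mul_le_mul_of_nonneg_right h2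
          exact mul_nonneg (le_of_lt (Finset.prod_pos fun i _ => hfpos i)) hVk0
      _ = ρ ^ m * (Real.exp (|lam (v (j : Fin n))| * T (j : Fin n)) *
            (∏ i ∈ Finset.range j, f i)) * Vk 0 := by
          rw [hCsplit, hkjcast]; ring
      _ ≤ ρ ^ m * K * Vk 0 := by
          apply mul_le_mul_of_nonneg_right _ hVk0
          exact mul_le_mul_of_nonneg_left hKey (le_of_lt hρpos)
      _ = K * ρ ^ m * Vk 0 := by ring
  -- eigenvalue bounds
  have hEe : ∀ p i, e ≤ (hP p).1.eigenvalues i ∧ (hP p).1.eigenvalues i ≤ E := by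
    intro p i
    constructor
    · rw [he]
      calc (⨅ p, ⨅ i, (hP p).1.eigenvalues i) ≤ ⨅ i, (hP p).1.eigenvalues i :=
          ciInf_le (Finite.bddBelow_range _) p
        _ ≤ (hP p).1.eigenvalues i := ciInf_le (Finite.bddBelow_range _) i
    · rw [hE]
      calc (hP p).1.eigenvalues i ≤ ⨆ i, (hP p).1.eigenvalues i :=
          le_ciSup (Finite.bddAbove_range _) i
        _ ≤ ⨆ p, ⨆ i, (hP p).1.eigenvalues i :=
          le_ciSup (f := fun p => ⨆ i, (hP p).1.eigenvalues i) (Finite.bddAbove_range _) p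
  have hepos : 0 < e := by
    rw [he]
    obtain ⟨p0, hp0⟩ := exists_eq_ciInf_of_finite (f := fun p => ⨅ i, (hP p).1.eigenvalues i)
    refine lt_of_lt_of_eq ?_ hp0
    obtain ⟨i0, hi0⟩ := exists_eq_ciInf_of_finite (f := fun i => (hP p0).1.eigenvalues i)
    refine lt_of_lt_of_eq ?_ hi0
    exact (hP p0).eigenvalues_pos i0
  have hEpos : 0 < E := by
    obtain ⟨p0⟩ := (inferInstance : Nonempty Λ)
    exact lt_of_lt_of_le ((hP p0).eigenvalues_pos ⟨0, hd⟩) (hEe p0 ⟨0, hd⟩).2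
  -- assemble
  have hlow : e * ∑ i, x t i ^ 2 ≤ V (v (k : Fin n)) (x t) :=
    quad_lb_aux (hP _).1 _ (fun i => (hEe _ i).1)
  have hVk0ub : Vk 0 ≤ E * ∑ i, x0 i ^ 2 := by
    have : x (τ 0) = x0 := by rw [hτ0, hx0]
    rw [hVk]
    simp only [this]
    exact quad_ub_aux (hP _).1 _ (fun i => (hEe _ i).2)
  have hKρ : 0 < K * ρ ^ m := mul_pos (Real.exp_pos _) (pow_pos (Real.exp_pos _) m)
  have hfinal : ∑ i, x t i ^ 2 ≤ E / e * (K * ρ ^ m) * ∑ i, x0 i ^ 2 := by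
    have h1 : e * ∑ i, x t i ^ 2 ≤ K * ρ ^ m * (E * ∑ i, x0 i ^ 2) := by
      calc e * ∑ i, x t i ^ 2 ≤ V (v (k : Fin n)) (x t) := hlow
        _ ≤ K * ρ ^ m * Vk 0 := hVt
        _ ≤ K * ρ ^ m * (E * ∑ i, x0 i ^ 2) :=
          mul_le_mul_of_nonneg_left hVk0ub (le_of_lt hKρ)
    rw [div_mul_eq_mul_div, div_mul_eq_mul_div, le_div_iff₀ hepos]
    nlinarith [h1]
  calc Real.sqrt (∑ i, x t i ^ 2)
      ≤ Real.sqrt (E / e * (K * ρ ^ m) * ∑ i, x0 i ^ 2) := Real.sqrt_le_sqrt hfinal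
    _ = Real.sqrt (E / e) * Real.sqrt (K * ρ ^ m) * Real.sqrt (∑ i, x0 i ^ 2) := by
        have hEdiv : (0:ℝ) ≤ E / e := div_nonneg hEpos.le hepos.le
        rw [Real.sqrt_mul (mul_nonneg hEdiv hKρ.le), Real.sqrt_mul hEdiv]
end

section
/- Let A_s, A_u ∈ ℝ^{d×d}, let P_s, P_u ∈ ℝ^{d×d} be symmetric positive definite, and let λ_s > 0 and λ_u ≤ 0 be such that for all t ≥ 0 and ξ ∈ ℝ^d: (exp(t·A_s)·ξ)ᵀ P_s (exp(t·A_s)·ξ) ≤ exp(−λ_s·t)·ξᵀP_sξ and (exp(t·A_u)·ξ)ᵀ P_u (exp(t·A_u)·ξ) ≤ exp(−λ_u·t)·ξᵀP_uξ. Let μ_su, μ_us ≥ 1 satisfy ξᵀP_uξ ≤ μ_su·ξᵀP_sξ and ξᵀP_sξ ≤ μ_us·ξᵀP_uξ for all ξ ∈ ℝ^d. Suppose T_s, T_u > 0 satisfy −λ_s·T_s − λ_u·T_u + ln μ_su + ln μ_us < 0. Then, with M := exp(T_u·A_u)·exp(T_s·A_s) and ρ := μ_su·μ_us·exp(−λ_s·T_s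 − λ_u·T_u), we have ρ < 1, (M^m x)ᵀ P_s (M^m x) ≤ ρ^m · xᵀP_sx for all x ∈ ℝ^d and m ∈ ℕ, and M^m x → 0 as m → ∞ for every x ∈ ℝ^d. -/
open Matrix

lemma quad_smul {d : ℕ} (P : Matrix (Fin d) (Fin d) ℝ) (c : ℝ) (v : Fin d → ℝ) :
    (c • v) ⬝ᵥ P.mulVec (c • v) = c ^ 2 * (v ⬝ᵥ P.mulVec v) := by
  rw [mulVec_smul, dotProduct_smul, smul_dotProduct]
  simp [smul_eq_mul]; ring

lemma quad_coercive {d : ℕ} (P : Matrix (Fin d) (Fin d) ℝ) (hP : P.PosDef) :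
    ∃ c > 0, ∀ v : Fin d → ℝ, c * ‖v‖ ^ 2 ≤ v ⬝ᵥ P.mulVec v := by
  have hcont : Continuous (fun v : Fin d → ℝ => v ⬝ᵥ P.mulVec v) :=
    continuous_id.dotProduct
      ((continuous_const : Continuous fun _ : (Fin d → ℝ) => P).matrix_mulVec continuous_id)
  by_cases hS : (Metric.sphere (0 : Fin d → ℝ) 1).Nonempty
  · obtain ⟨u, huS, hmin'⟩ := (isCompact_sphere (0 : Fin d → ℝ) 1).exists_isMinOn hS
      hcont.continuousOn
    have hmin : ∀ w ∈ Metric.sphere (0 : Fin d → ℝ) 1,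
        u ⬝ᵥ P.mulVec u ≤ w ⬝ᵥ P.mulVec w := fun w hw => hmin' hw
    have hu1 : ‖u‖ = 1 := by simpa using huS
    have hu0 : u ≠ 0 := by intro h; rw [h] at hu1; simp at hu1
    refine ⟨u ⬝ᵥ P.mulVec u, hP.re_dotProduct_pos hu0, fun v => ?_⟩
    rcases eq_or_ne v 0 with rfl | hv
    · simp
    · have hnv : (0:ℝ) < ‖v‖ := norm_pos_iff.mpr hv
      have hw : (‖v‖⁻¹ • v) ∈ Metric.sphere (0 : Fin d → ℝ) 1 := by
        simp [norm_smul, abs_of_pos (inv_pos.mpr hnv), inv_mul_cancel₀ hnv.ne']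
      have := hmin _ hw
      rw [quad_smul] at this
      have h2 : (‖v‖⁻¹) ^ 2 * (v ⬝ᵥ P.mulVec v) * ‖v‖ ^ 2 = v ⬝ᵥ P.mulVec v := by
        field_simp
      nlinarith [sq_nonneg ‖v‖, sq_nonneg (‖v‖⁻¹)]
  · refine ⟨1, one_pos, fun v => ?_⟩
    have hv : v = 0 := by
      by_contra hv
      have hnv : (0:ℝ) < ‖v‖ := norm_pos_iff.mpr hv
      exact hS ⟨‖v‖⁻¹ • v, by
        simp [norm_smul, abs_of_pos (inv_pos.mpr hnv), inv_mul_cancel₀ hnv.ne']⟩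
    simp [hv]

theorem stmt_15 {d : ℕ} (As Au : Matrix (Fin d) (Fin d) ℝ)
    (Ps Pu : Matrix (Fin d) (Fin d) ℝ)
    (hPs : Ps.PosDef) (hPu : Pu.PosDef)
    (lams lamu : ℝ) (hlams : 0 < lams) (hlamu : lamu ≤ 0)
    (hdecs : ∀ t : ℝ, 0 ≤ t → ∀ ξ : Fin d → ℝ,
      (NormedSpace.exp (t • As)).mulVec ξ ⬝ᵥ
          Ps.mulVec ((NormedSpace.exp (t • As)).mulVec ξ)
        ≤ Real.exp (-lams * t) * (ξ ⬝ᵥ Ps.mulVec ξ))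
    (hdecu : ∀ t : ℝ, 0 ≤ t → ∀ ξ : Fin d → ℝ,
      (NormedSpace.exp (t • Au)).mulVec ξ ⬝ᵥ
          Pu.mulVec ((NormedSpace.exp (t • Au)).mulVec ξ)
        ≤ Real.exp (-lamu * t) * (ξ ⬝ᵥ Pu.mulVec ξ))
    (μsu μus : ℝ) (hμsu1 : 1 ≤ μsu) (hμus1 : 1 ≤ μus)
    (hμsu : ∀ ξ : Fin d → ℝ, ξ ⬝ᵥ Pu.mulVec ξ ≤ μsu * (ξ ⬝ᵥ Ps.mulVec ξ))
    (hμus : ∀ ξ : Fin d → ℝ, ξ ⬝ᵥ Ps.mulVec ξ ≤ μus * (ξ ⬝ᵥ Pu.mulVec ξ))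
    (Ts Tu : ℝ) (hTs : 0 < Ts) (hTu : 0 < Tu)
    (hcontract : -lams * Ts - lamu * Tu + Real.log μsu + Real.log μus < 0) :
    μsu * μus * Real.exp (-lams * Ts - lamu * Tu) < 1 ∧
    (∀ (x : Fin d → ℝ) (m : ℕ),
      (((NormedSpace.exp (Tu • Au) * NormedSpace.exp (Ts • As)) ^ m).mulVec x) ⬝ᵥ
          Ps.mulVec (((NormedSpace.exp (Tu • Au) * NormedSpace.exp (Ts • As)) ^ m).mulVec x)
        ≤ (μsu * μus * Real.exp (-lams * Ts - lamu * Tu)) ^ m * (x ⬝ᵥ Ps.mulVec x)) ∧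
    (∀ x : Fin d → ℝ,
      Filter.Tendsto
        (fun m : ℕ =>
          ((NormedSpace.exp (Tu • Au) * NormedSpace.exp (Ts • As)) ^ m).mulVec x)
        Filter.atTop (nhds 0)) := by
  have hμsu0 : (0:ℝ) < μsu := lt_of_lt_of_le one_pos hμsu1
  have hμus0 : (0:ℝ) < μus := lt_of_lt_of_le one_pos hμus1
  set M : Matrix (Fin d) (Fin d) ℝ :=
    NormedSpace.exp (Tu • Au) * NormedSpace.exp (Ts • As) with hMdef
  set ρ : ℝ := μsu * μus * Real.exp (-lams * Ts - lamu * Tu) with hρdef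
  have hρ0 : 0 < ρ := by positivity
  have hρ1 : ρ < 1 := by
    have h1 : Real.exp (-lams * Ts - lamu * Tu + Real.log μsu + Real.log μus) < 1 := by
      rw [← Real.exp_zero]
      exact Real.exp_lt_exp.mpr hcontract
    calc ρ = Real.exp (-lams * Ts - lamu * Tu + Real.log μsu + Real.log μus) := by
            rw [Real.exp_add, Real.exp_add, Real.exp_log hμsu0, Real.exp_log hμus0]; ring
      _ < 1 := h1
  -- one step contraction
  have hstep : ∀ ξ : Fin d → ℝ,
      (M.mulVec ξ) ⬝ᵥ Ps.mulVec (M.mulVec ξ) ≤ ρ * (ξ ⬝ᵥ Ps.mulVec ξ) := by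
    intro ξ
    set y := (NormedSpace.exp (Ts • As)).mulVec ξ with hy
    set z := (NormedSpace.exp (Tu • Au)).mulVec y with hz
    have hMx : M.mulVec ξ = z := by
      rw [hMdef, ← mulVec_mulVec]
    rw [hMx]
    have h1 : z ⬝ᵥ Ps.mulVec z ≤ μus * (z ⬝ᵥ Pu.mulVec z) := hμus z
    have h2 : z ⬝ᵥ Pu.mulVec z ≤ Real.exp (-lamu * Tu) * (y ⬝ᵥ Pu.mulVec y) :=
      hdecu Tu hTu.le y
    have h3 : y ⬝ᵥ Pu.mulVec y ≤ μsu * (y ⬝ᵥ Ps.mulVec y) := hμsu y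
    have h4 : y ⬝ᵥ Ps.mulVec y ≤ Real.exp (-lams * Ts) * (ξ ⬝ᵥ Ps.mulVec ξ) :=
      hdecs Ts hTs.le ξ
    have nny : 0 ≤ y ⬝ᵥ Pu.mulVec y := hPu.posSemidef.re_dotProduct_nonneg y
    have nnys : 0 ≤ y ⬝ᵥ Ps.mulVec y := hPs.posSemidef.re_dotProduct_nonneg y
    have nnz : 0 ≤ z ⬝ᵥ Pu.mulVec z := hPu.posSemidef.re_dotProduct_nonneg z
    have hexp1 : (0:ℝ) < Real.exp (-lamu * Tu) := Real.exp_pos _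
    have hexp2 : (0:ℝ) < Real.exp (-lams * Ts) := Real.exp_pos _
    have hρeq : ρ = μus * (Real.exp (-lamu * Tu) * (μsu * Real.exp (-lams * Ts))) := by
      rw [hρdef, show -lams * Ts - lamu * Tu = -lamu * Tu + -lams * Ts by ring,
        Real.exp_add]; ring
    rw [hρeq]
    calc z ⬝ᵥ Ps.mulVec z ≤ μus * (z ⬝ᵥ Pu.mulVec z) := h1
      _ ≤ μus * (Real.exp (-lamu * Tu) * (y ⬝ᵥ Pu.mulVec y)) :=
          mul_le_mul_of_nonneg_left h2 hμus0.le
      _ ≤ μus * (Real.exp (-lamu * Tu) * (μsu * (y ⬝ᵥ Ps.mulVec y))) :=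
          mul_le_mul_of_nonneg_left
            (mul_le_mul_of_nonneg_left h3 hexp1.le) hμus0.le
      _ ≤ μus * (Real.exp (-lamu * Tu) * (μsu * (Real.exp (-lams * Ts) * (ξ ⬝ᵥ Ps.mulVec ξ)))) :=
          mul_le_mul_of_nonneg_left
            (mul_le_mul_of_nonneg_left
              (mul_le_mul_of_nonneg_left h4 hμsu0.le) hexp1.le) hμus0.le
      _ = μus * (Real.exp (-lamu * Tu) * (μsu * Real.exp (-lams * Ts))) * (ξ ⬝ᵥ Ps.mulVec ξ) := by
          ring
  have key : ∀ (x : Fin d → ℝ) (m : ℕ),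
      ((M ^ m).mulVec x) ⬝ᵥ Ps.mulVec ((M ^ m).mulVec x)
        ≤ ρ ^ m * (x ⬝ᵥ Ps.mulVec x) := by
    intro x m
    induction m with
    | zero => simp
    | succ m ih =>
      have hpow : (M ^ (m + 1)).mulVec x = M.mulVec ((M ^ m).mulVec x) := by
        rw [mulVec_mulVec, ← pow_succ']
      rw [hpow]
      calc (M.mulVec ((M ^ m).mulVec x)) ⬝ᵥ Ps.mulVec (M.mulVec ((M ^ m).mulVec x))
          ≤ ρ * (((M ^ m).mulVec x) ⬝ᵥ Ps.mulVec ((M ^ m).mulVec x)) := hstep _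
        _ ≤ ρ * (ρ ^ m * (x ⬝ᵥ Ps.mulVec x)) := by
            exact mul_le_mul_of_nonneg_left ih hρ0.le
        _ = ρ ^ (m + 1) * (x ⬝ᵥ Ps.mulVec x) := by ring
  refine ⟨hρ1, key, ?_⟩
  intro x
  obtain ⟨c, hc, hcoer⟩ := quad_coercive Ps hPs
  set v : ℕ → Fin d → ℝ := fun m => (M ^ m).mulVec x with hv
  have hqx : 0 ≤ x ⬝ᵥ Ps.mulVec x := hPs.posSemidef.re_dotProduct_nonneg x
  have hbound : ∀ m, ‖v m‖ ^ 2 ≤ ((x ⬝ᵥ Ps.mulVec x) / c) * ρ ^ m := by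
    intro m
    have h1 := hcoer (v m)
    have h2 := key x m
    rw [div_mul_eq_mul_div, le_div_iff₀ hc]
    nlinarith
  have hsq : Filter.Tendsto (fun m => ‖v m‖ ^ 2) Filter.atTop (nhds 0) := by
    have hlim : Filter.Tendsto (fun m : ℕ => ((x ⬝ᵥ Ps.mulVec x) / c) * ρ ^ m)
        Filter.atTop (nhds 0) := by
      simpa using (tendsto_pow_atTop_nhds_zero_of_lt_one hρ0.le hρ1).const_mul
        ((x ⬝ᵥ Ps.mulVec x) / c)
    exact squeeze_zero (fun m => sq_nonneg _) hbound hlim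
  have hn : Filter.Tendsto (fun m => ‖v m‖) Filter.atTop (nhds 0) := by
    have h := (Real.continuous_sqrt.tendsto 0).comp hsq
    rw [Real.sqrt_zero] at h
    have heq : (fun m => ‖v m‖) = fun m => Real.sqrt (‖v m‖ ^ 2) :=
      funext fun m => (Real.sqrt_sq (norm_nonneg _)).symm
    rw [heq]
    exact h
  exact tendsto_zero_iff_norm_tendsto_zero.mpr hn
end
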